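/- arXiv:2009.01425 — 4 statements merged into one kernel-verified Lean document; each statement's English description precedes it below -/
import Mathlib

section
/- Let A = A₀ + A₁ ≥ 1 and b = b₀ + b₁. Then for all N ≥ 0: if A = 1 then Σ(N) = f(1) + b·(2^N − 1); if A = 2 then Σ(N) = 2^N·f(1) + b·N·2^{N−1}; and if A > 2 then Σ(N) = A^N·f(1) + b·(A^N − 2^N)/(A − 2). -/
open MeasureTheory Filter Topology

/-- The `N`-th approximant to the ghost measure of `f`: the normalised Dirac comb built from
the values of `f` on the fundamental region `[2^N, 2^(N+1))`. -/
noncomputable def ghostApprox (f : ℕ → ℕ) (N : ℕ) : Measure ℝ :=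
  (∑ n ∈ Finset.range (2 ^ N), (f (2 ^ N + n) : ENNReal))⁻¹ •
    ∑ n ∈ Finset.range (2 ^ N), (f (2 ^ N + n) : ENNReal) • Measure.dirac ((n : ℝ) / 2 ^ N)

/-- Weak (vague) convergence of a sequence of finite measures on `ℝ`. -/
def WeakLimit (μs : ℕ → Measure ℝ) (μ : Measure ℝ) : Prop :=
  ∀ g : BoundedContinuousFunction ℝ ℝ,
    Tendsto (fun N => ∫ x, g x ∂(μs N)) atTop (𝓝 (∫ x, g x ∂μ))
theorem stmt_0 (A₀ A₁ b₀ b₁ : ℕ) (hnz : ¬(A₀ = 0 ∧ A₁ = 0 ∧ b₀ = 0 ∧ b₁ = 0))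
    (f : ℕ → ℕ) (hf1 : 1 ≤ f 1)
    (heven : ∀ n, 1 ≤ n → f (2 * n) = A₀ * f n + b₀)
    (hodd : ∀ n, 1 ≤ n → f (2 * n + 1) = A₁ * f n + b₁)
    (hA : 1 ≤ A₀ + A₁) :
    ∀ N : ℕ,
      (A₀ + A₁ = 1 →
        ((∑ n ∈ Finset.range (2 ^ N), f (2 ^ N + n) : ℕ) : ℚ) =
          f 1 + (b₀ + b₁) * (2 ^ N - 1)) ∧
      (A₀ + A₁ = 2 →
        ((∑ n ∈ Finset.range (2 ^ N), f (2 ^ N + n) : ℕ) : ℚ) =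
          2 ^ N * f 1 + (b₀ + b₁) * N * 2 ^ N / 2) ∧
      (2 < A₀ + A₁ →
        ((∑ n ∈ Finset.range (2 ^ N), f (2 ^ N + n) : ℕ) : ℚ) =
          ((A₀ + A₁ : ℚ)) ^ N * f 1 +
            (b₀ + b₁) * (((A₀ + A₁ : ℚ)) ^ N - 2 ^ N) / ((A₀ + A₁ : ℚ) - 2)) := by
  -- sum over range (2*k) split into even/odd
  have hsplit : ∀ (g : ℕ → ℕ) (k : ℕ),
      ∑ n ∈ Finset.range (2 * k), g n = ∑ i ∈ Finset.range k, (g (2 * i) + g (2 * i + 1)) := by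
    intro g k
    induction k with
    | zero => simp
    | succ k ih =>
      rw [Finset.sum_range_succ, ← ih, Nat.mul_succ]
      rw [show 2 * k + 2 = (2 * k + 1) + 1 by ring, Finset.sum_range_succ,
        Finset.sum_range_succ]
      ring
  -- the recurrence for Σ
  have hrec : ∀ N : ℕ,
      ∑ n ∈ Finset.range (2 ^ (N + 1)), f (2 ^ (N + 1) + n) =
        (A₀ + A₁) * (∑ n ∈ Finset.range (2 ^ N), f (2 ^ N + n)) + (b₀ + b₁) * 2 ^ N := by
    intro N
    have h2 : (2 : ℕ) ^ (N + 1) = 2 * 2 ^ N := by ring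
    rw [h2, hsplit (fun n => f (2 * 2 ^ N + n)) (2 ^ N)]
    have : ∀ i ∈ Finset.range (2 ^ N),
        f (2 * 2 ^ N + 2 * i) + f (2 * 2 ^ N + (2 * i + 1)) =
          (A₀ + A₁) * f (2 ^ N + i) + (b₀ + b₁) := by
      intro i _
      have h1 : 1 ≤ 2 ^ N + i := le_trans (Nat.one_le_two_pow) (Nat.le_add_right _ _)
      have e1 : 2 * 2 ^ N + 2 * i = 2 * (2 ^ N + i) := by ring
      have e2 : 2 * 2 ^ N + (2 * i + 1) = 2 * (2 ^ N + i) + 1 := by ring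
      rw [e1, e2, heven _ h1, hodd _ h1]
      ring
    rw [Finset.sum_congr rfl this, Finset.sum_add_distrib, ← Finset.mul_sum]
    simp [mul_comm]
  have hrecQ : ∀ N : ℕ,
      ((∑ n ∈ Finset.range (2 ^ (N + 1)), f (2 ^ (N + 1) + n) : ℕ) : ℚ) =
        ((A₀ : ℚ) + A₁) * ((∑ n ∈ Finset.range (2 ^ N), f (2 ^ N + n) : ℕ) : ℚ) +
          ((b₀ : ℚ) + b₁) * 2 ^ N := by
    intro N
    rw [hrec N]
    push_cast
    ring
  have hbase : ((∑ n ∈ Finset.range (2 ^ 0), f (2 ^ 0 + n) : ℕ) : ℚ) = f 1 := by simp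
  intro N
  induction N with
  | zero =>
    refine ⟨fun _ => ?_, fun _ => ?_, fun _ => ?_⟩ <;> rw [hbase] <;> push_cast <;> ring
  | succ N ih =>
    obtain ⟨ih1, ih2, ih3⟩ := ih
    refine ⟨fun h1 => ?_, fun h2 => ?_, fun h3 => ?_⟩
    · have hc : ((A₀ : ℚ) + A₁) = 1 := by exact_mod_cast congrArg (Nat.cast : ℕ → ℚ) h1
      rw [hrecQ N, ih1 h1, hc]
      push_cast
      ring
    · have hc : ((A₀ : ℚ) + A₁) = 2 := by exact_mod_cast congrArg (Nat.cast : ℕ → ℚ) h2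
      rw [hrecQ N, ih2 h2, hc]
      push_cast
      ring
    · have hc : ((A₀ : ℚ) + A₁) ≠ 2 := by
        intro h
        have : A₀ + A₁ = 2 := by exact_mod_cast h
        omega
      have hne : ((A₀ : ℚ) + A₁) - 2 ≠ 0 := sub_ne_zero_of_ne hc
      rw [hrecQ N, ih3 h3]
      field_simp
      ring
end

section
/- If b₀ + b₁ ≥ 1 and A₀ + A₁ ≤ 2, then the approximants μ_N converge weakly to Lebesgue measure restricted to [0,1); i.e. the ghost measure of f equals λ. -/
open MeasureTheory Filter Topology

/-! ### Auxiliary arithmetic -/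

/-- Sum of `f` over the block `[p·2^M, (p+1)·2^M)`. -/
private def blkS (f : ℕ → ℕ) (p M : ℕ) : ℕ := ∑ m ∈ Finset.range (2^M), f (p * 2^M + m)

private def cc (s M : ℕ) : ℕ := ∑ i ∈ Finset.range M, s^(M-1-i) * 2^i

private lemma sum_range_two_mul {β : Type*} [AddCommMonoid β] (g : ℕ → β) (n : ℕ) :
    ∑ i ∈ Finset.range (2*n), g i = ∑ i ∈ Finset.range n, (g (2*i) + g (2*i+1)) := by
  induction n with
  | zero => simp
  | succ n ih =>
      rw [Finset.sum_range_succ, ← ih, Nat.mul_succ, Finset.sum_range_add]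
      simp [Finset.sum_range_succ, mul_comm]

private lemma sum_range_mul {β : Type*} [AddCommMonoid β] (g : ℕ → β) (a c : ℕ) :
    ∑ n ∈ Finset.range (a*c), g n = ∑ j ∈ Finset.range a, ∑ m ∈ Finset.range c, g (j*c+m) := by
  induction a with
  | zero => simp
  | succ a ih =>
      rw [Nat.succ_mul, Finset.sum_range_add, ih, Finset.sum_range_succ]

private lemma cc_succ (s M : ℕ) : cc s (M+1) = s * cc s M + 2^M := by
  unfold cc
  rw [Finset.sum_range_succ]
  have : ∀ i ∈ Finset.range M, s^(M+1-1-i) * 2^i = s * (s^(M-1-i) * 2^i) := by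
    intro i hi
    have hi' := Finset.mem_range.mp hi
    have : M + 1 - 1 - i = (M - 1 - i) + 1 := by omega
    rw [this, pow_succ]; ring
  rw [Finset.sum_congr rfl this, ← Finset.mul_sum]
  simp

private lemma cc_one (M : ℕ) : cc 1 M + 1 = 2^M := by
  induction M with
  | zero => simp [cc]
  | succ M ih => rw [cc_succ]; omega

private lemma cc_two (M : ℕ) : 2 * cc 2 M = M * 2^M := by
  induction M with
  | zero => simp [cc]
  | succ M ih => rw [cc_succ, pow_succ]; ring_nf; omega

private lemma cc_zero (M : ℕ) : cc 0 (M+1) = 2^M := by rw [cc_succ]; simp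

section Recurrence
variable {A₀ A₁ b₀ b₁ : ℕ} {f : ℕ → ℕ}
  (heven : ∀ n, 1 ≤ n → f (2 * n) = A₀ * f n + b₀)
  (hodd : ∀ n, 1 ≤ n → f (2 * n + 1) = A₁ * f n + b₁)

include heven hodd in
private lemma blkS_succ {p : ℕ} (hp : 1 ≤ p) (M : ℕ) :
    blkS f p (M+1) = (A₀+A₁) * blkS f p M + (b₀+b₁) * 2^M := by
  unfold blkS
  have h2 : (2:ℕ)^(M+1) = 2 * 2^M := by ring
  rw [h2, sum_range_two_mul (fun m => f (p * (2*2^M) + m))]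
  have : ∀ m ∈ Finset.range (2^M),
      f (p * (2*2^M) + 2*m) + f (p * (2*2^M) + (2*m+1))
        = (A₀ * f (p*2^M+m) + b₀) + (A₁ * f (p*2^M+m) + b₁) := by
    intro m _
    have e1 : p * (2*2^M) + 2*m = 2 * (p*2^M + m) := by ring
    have e2 : p * (2*2^M) + (2*m+1) = 2 * (p*2^M + m) + 1 := by ring
    have hge : 1 ≤ p*2^M + m := le_add_right (Nat.one_le_iff_ne_zero.mpr
      (by positivity))
    rw [e1, e2, heven _ hge, hodd _ hge]
  rw [Finset.sum_congr rfl this]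
  simp only [Finset.sum_add_distrib, ← Finset.mul_sum, Finset.sum_const,
    Finset.card_range, smul_eq_mul]
  ring

include heven hodd in
private lemma blkS_eq {p : ℕ} (hp : 1 ≤ p) (M : ℕ) :
    blkS f p M = (A₀+A₁)^M * f p + (b₀+b₁) * cc (A₀+A₁) M := by
  induction M with
  | zero => simp [blkS, cc]
  | succ M ih =>
      rw [blkS_succ heven hodd hp, ih, cc_succ, pow_succ]
      ring

include heven hodd in
private lemma one_le_blkS (hf1 : 1 ≤ f 1) (hb : 1 ≤ b₀ + b₁) (N : ℕ) : 1 ≤ blkS f 1 N := by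
  cases N with
  | zero => simpa [blkS] using hf1
  | succ N =>
      rw [blkS_succ heven hodd le_rfl]
      have : 1 ≤ (b₀+b₁) * 2^N := Nat.one_le_iff_ne_zero.mpr (by positivity)
      omega
end Recurrence

/-! ### The ratio limit -/

private lemma aux_div (u : ℕ → ℝ) (hu : Tendsto u atTop atTop) (a c d e : ℝ) (hd : d ≠ 0) :
    Tendsto (fun M => (a * u M + c)/(d * u M + e)) atTop (𝓝 (a/d)) := by
  have h0c : Tendsto (fun M => c / u M) atTop (𝓝 0) := tendsto_const_nhds.div_atTop hu
  have h0e : Tendsto (fun M => e / u M) atTop (𝓝 0) := tendsto_const_nhds.div_atTop hu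
  have hmain : Tendsto (fun M => (a + c/u M)/(d + e/u M)) atTop (𝓝 (a/d)) := by
    have := ((tendsto_const_nhds (x := a)).add h0c).div
      ((tendsto_const_nhds (x := d)).add h0e) (by simpa using hd)
    rwa [add_zero, add_zero] at this
  refine hmain.congr' ?_
  filter_upwards [hu.eventually_ge_atTop 1] with M hM
  have hM0 : u M ≠ 0 := by linarith
  have e1 : a + c/u M = (a*u M + c)/u M := by field_simp
  have e2 : d + e/u M = (d*u M + e)/u M := by field_simp
  rw [e1, e2, div_div_div_cancel_right₀ hM0]

private lemma ratio_tendsto (s b F f1 : ℕ) (hs : s ≤ 2) (hb : 1 ≤ b) (hf1 : 1 ≤ f1) (k : ℕ) :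
    Tendsto (fun M => ((s^M * F + b * cc s M : ℕ):ℝ) / ((s^(M+k) * f1 + b * cc s (M+k) : ℕ):ℝ))
      atTop (𝓝 (1/2^k)) := by
  have hbR : (1:ℝ) ≤ b := by exact_mod_cast hb
  have hf1R : (1:ℝ) ≤ f1 := by exact_mod_cast hf1
  interval_cases s
  · -- s = 0
    refine Tendsto.congr' ?_ (tendsto_const_nhds (x := (1:ℝ)/2^k))
    filter_upwards [eventually_ge_atTop 1] with M hM
    obtain ⟨M', rfl⟩ : ∃ M', M = M'+1 := ⟨M-1, by omega⟩
    have h1 : M' + 1 + k = (M' + k) + 1 := by omega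
    rw [h1, cc_zero, cc_zero]
    push_cast
    rw [zero_pow (by omega), zero_pow (by omega), pow_add]
    have h2 : (0:ℝ) < 2^M' := by positivity
    field_simp
    ring
  · -- s = 1
    have hcc : ∀ M, (cc 1 M : ℝ) = 2^M - 1 := by
      intro M
      have := congrArg (Nat.cast : ℕ → ℝ) (cc_one M)
      push_cast at this
      linarith
    have hlim := aux_div (fun M => (2:ℝ)^M)
      (tendsto_pow_atTop_atTop_of_one_lt one_lt_two) b ((F:ℝ)-b) (b*2^k) ((f1:ℝ)-b)
      (by positivity)
    have hb0 : (b:ℝ) ≠ 0 := by positivity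
    have hval : (b:ℝ)/(b*2^k) = 1/2^k := by
      field_simp
    rw [hval] at hlim
    refine hlim.congr fun M => ?_
    push_cast
    rw [hcc, hcc, pow_add]
    ring
  · -- s = 2
    have hcc : ∀ M, (cc 2 M : ℝ) = M * 2^M / 2 := by
      intro M
      have := congrArg (Nat.cast : ℕ → ℝ) (cc_two M)
      push_cast at this
      linarith
    have hlim := aux_div (fun M => (M:ℝ)) tendsto_natCast_atTop_atTop
      b (2*F) (2^k*b) (2^(k+1)*f1 + 2^k*b*k) (by positivity)
    have hb0 : (b:ℝ) ≠ 0 := by positivity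
    have hval : (b:ℝ)/(2^k*b) = 1/2^k := by
      field_simp
    rw [hval] at hlim
    refine hlim.congr fun M => ?_
    push_cast
    rw [hcc, hcc]
    have hden1 : (0:ℝ) < 2^(M+k) * f1 + b * ((↑(M+k)) * 2^(M+k) / 2) := by
      have h1 : (0:ℝ) < (2:ℝ)^(M+k) * f1 := mul_pos (by positivity) (by linarith)
      have h2 : (0:ℝ) ≤ (b:ℝ) * ((↑(M+k)) * 2^(M+k) / 2) := by positivity
      linarith
    have hden2 : (0:ℝ) < (2^k*(b:ℝ))*M + (2^(k+1)*f1 + 2^k*b*k) := by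
      have h1 : (0:ℝ) ≤ (2^k*(b:ℝ))*M := by positivity
      have h2 : (0:ℝ) < 2^(k+1)*(f1:ℝ) := mul_pos (by positivity) (by linarith)
      have h3 : (0:ℝ) ≤ 2^k*(b:ℝ)*k := by positivity
      linarith
    rw [div_eq_div_iff (by push_cast at hden1 ⊢; linarith) (by linarith)]
    push_cast
    ring

/-! ### Integrals against the approximants -/

private lemma integrable_smul_dirac (g : BoundedContinuousFunction ℝ ℝ) (a : ℕ) (x : ℝ) :
    Integrable (fun y => g y) ((a : ENNReal) • Measure.dirac x) := by
  have : IsFiniteMeasure ((a : ENNReal) • Measure.dirac x) := by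
    constructor
    rw [Measure.smul_apply, smul_eq_mul]
    exact ENNReal.mul_lt_top (ENNReal.natCast_ne_top a).lt_top (by simp)
  exact g.integrable _

private lemma integral_ghostApprox (f : ℕ → ℕ) (N : ℕ) (g : BoundedContinuousFunction ℝ ℝ) :
    ∫ x, g x ∂(ghostApprox f N)
      = ((∑ n ∈ Finset.range (2^N), (f (2^N+n) : ℝ))⁻¹) *
        ∑ n ∈ Finset.range (2^N), (f (2^N+n) : ℝ) * g ((n:ℝ)/2^N) := by
  unfold ghostApprox
  rw [integral_smul_measure,
    integral_finset_sum_measure (fun n _ => integrable_smul_dirac g _ _)]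
  have h1 : ∀ n : ℕ, ∫ x, g x ∂((f (2^N+n) : ENNReal) • Measure.dirac ((n:ℝ)/2^N))
      = (f (2^N+n) : ℝ) * g ((n:ℝ)/2^N) := by
    intro n
    rw [integral_smul_measure, integral_dirac]
    simp [smul_eq_mul]
  rw [Finset.sum_congr rfl fun n _ => h1 n]
  have h2 : (∑ n ∈ Finset.range (2^N), (f (2^N+n) : ENNReal))
      = ((∑ n ∈ Finset.range (2^N), f (2^N+n) : ℕ) : ENNReal) := by push_cast; rfl
  rw [h2, smul_eq_mul]
  congr 1
  rw [ENNReal.toReal_inv, ENNReal.toReal_natCast]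
  push_cast
  rfl

/-! ### Riemann-sum approximation of the integral -/

private lemma riemann_bound (g : BoundedContinuousFunction ℝ ℝ) (k : ℕ) (ε : ℝ)
    (hUC : ∀ x ∈ Set.Icc (0:ℝ) 1, ∀ y ∈ Set.Icc (0:ℝ) 1, |x - y| ≤ 1/2^k → |g x - g y| ≤ ε) :
    |(∑ j ∈ Finset.range (2^k), (1/2^k : ℝ) * g ((j:ℝ)/2^k)) - ∫ x in Set.Ico (0:ℝ) 1, g x|
      ≤ ε := by
  have h2k : (0:ℝ) < 2^k := by positivity
  set a : ℕ → ℝ := fun j => (j:ℝ)/2^k with ha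
  have hint : ∀ i, IntervalIntegrable (fun x => g x) volume (a i) (a (i+1)) :=
    fun i => (g.continuous.intervalIntegrable _ _)
  have hsum := intervalIntegral.sum_integral_adjacent_intervals
    (a := a) (n := 2^k) (μ := volume) (f := fun x => g x) (fun i _ => hint i)
  have ha0 : a 0 = 0 := by simp [ha]
  have han : a (2^k) = 1 := by
    simp only [ha]
    push_cast
    field_simp
  have hI : ∫ x in Set.Ico (0:ℝ) 1, g x
      = ∑ j ∈ Finset.range (2^k), ∫ x in (a j)..(a (j+1)), g x := by
    rw [hsum, ha0, han, intervalIntegral.integral_of_le zero_le_one,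
      integral_Ico_eq_integral_Ioo, integral_Ioc_eq_integral_Ioo]
  rw [hI, ← Finset.sum_sub_distrib]
  refine (Finset.abs_sum_le_sum_abs _ _).trans ?_
  have hbound : ∀ j ∈ Finset.range (2^k),
      |(1/2^k : ℝ) * g (a j) - ∫ x in (a j)..(a (j+1)), g x| ≤ ε/2^k := by
    intro j hj
    have hjlt := Finset.mem_range.mp hj
    have hq : a (j+1) - a j = 1/2^k := by
      simp only [ha]
      push_cast
      ring
    have haj : a j ≤ a (j+1) := by linarith [hq, div_pos one_pos h2k]
    have haj0 : 0 ≤ a j := by positivity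
    have haj1 : a (j+1) ≤ 1 := by
      simp only [ha]
      rw [div_le_one h2k]
      push_cast
      have : j + 1 ≤ 2^k := hjlt
      exact_mod_cast this
    have e1 : (∫ x in (a j)..(a (j+1)), g x)
        = (∫ x in (a j)..(a (j+1)), (g x - g (a j))) + (1/2^k) * g (a j) := by
      rw [intervalIntegral.integral_sub (hint j) intervalIntegrable_const,
        intervalIntegral.integral_const, hq, smul_eq_mul]
      ring
    rw [e1]
    have e2 : |(1/2^k : ℝ) * g (a j)
          - ((∫ x in (a j)..(a (j+1)), (g x - g (a j))) + (1/2^k) * g (a j))|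
        = |∫ x in (a j)..(a (j+1)), (g x - g (a j))| := by
      rw [show (1/2^k : ℝ) * g (a j)
          - ((∫ x in (a j)..(a (j+1)), (g x - g (a j))) + (1/2^k) * g (a j))
        = -(∫ x in (a j)..(a (j+1)), (g x - g (a j))) by ring, abs_neg]
    rw [e2]
    have hb : ∀ x ∈ Set.uIoc (a j) (a (j+1)), ‖g x - g (a j)‖ ≤ ε := by
      intro x hx
      rw [Set.uIoc_of_le haj] at hx
      obtain ⟨hx1, hx2⟩ := hx
      have hx01 : x ∈ Set.Icc (0:ℝ) 1 := ⟨by linarith, by linarith⟩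
      have haj01 : a j ∈ Set.Icc (0:ℝ) 1 := ⟨haj0, by linarith⟩
      rw [Real.norm_eq_abs]
      exact hUC x hx01 (a j) haj01 (abs_le.mpr ⟨by linarith, by linarith⟩)
    have := intervalIntegral.norm_integral_le_of_norm_le_const hb
    rw [Real.norm_eq_abs] at this
    calc |∫ x in (a j)..(a (j+1)), (g x - g (a j))| ≤ ε * |a (j+1) - a j| := this
      _ = ε/2^k := by rw [hq, abs_of_pos (by positivity)]; ring
  refine (Finset.sum_le_sum hbound).trans ?_
  rw [Finset.sum_const, Finset.card_range, nsmul_eq_mul]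
  push_cast
  rw [mul_div_cancel₀ _ (ne_of_gt h2k)]

private lemma group_estimate (f : ℕ → ℕ) (g : BoundedContinuousFunction ℝ ℝ) (k N : ℕ) (hkN : k ≤ N)
    (hT : 1 ≤ blkS f 1 N) (ε4 : ℝ)
    (hUC : ∀ x ∈ Set.Icc (0:ℝ) 1, ∀ y ∈ Set.Icc (0:ℝ) 1, |x - y| ≤ 1/2^k → |g x - g y| ≤ ε4) :
    |((∑ n ∈ Finset.range (2^N), (f (2^N+n) : ℝ))⁻¹ *
        ∑ n ∈ Finset.range (2^N), (f (2^N+n) : ℝ) * g ((n:ℝ)/2^N))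
      - ∑ j ∈ Finset.range (2^k),
          ((blkS f (2^k+j) (N-k) : ℝ)/(blkS f 1 N : ℝ)) * g ((j:ℝ)/2^k)| ≤ ε4 := by
  set c : ℕ := 2^(N-k) with hc
  have hsplit : (2:ℕ)^N = 2^k * c := by rw [hc, ← pow_add, Nat.add_sub_cancel' hkN]
  have hsplitR : (2:ℝ)^N = 2^k * 2^(N-k) := by rw [← pow_add, Nat.add_sub_cancel' hkN]
  have hTR : (1:ℝ) ≤ (blkS f 1 N : ℝ) := by exact_mod_cast hT
  have hTRpos : (0:ℝ) < (blkS f 1 N : ℝ) := by linarith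
  have h2k : (0:ℝ) < 2^k := by positivity
  have h2Nk : (0:ℝ) < 2^(N-k) := by positivity
  have hTsum : ∑ n ∈ Finset.range (2^N), (f (2^N+n) : ℝ) = (blkS f 1 N : ℝ) := by
    rw [show blkS f 1 N = ∑ n ∈ Finset.range (2^N), f (2^N+n) by simp [blkS], Nat.cast_sum]
  have hmj : ∀ j, blkS f (2^k+j) (N-k) = ∑ m ∈ Finset.range c, f (2^N + (j*c+m)) := by
    intro j
    unfold blkS
    refine Finset.sum_congr rfl fun m _ => ?_
    congr 1
    rw [hsplit]
    ring
  -- rewrite the double sum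
  have hdouble : ∀ (h : ℕ → ℝ), ∑ n ∈ Finset.range (2^N), h n
      = ∑ j ∈ Finset.range (2^k), ∑ m ∈ Finset.range c, h (j*c+m) := by
    intro h
    rw [show Finset.range (2^N) = Finset.range (2^k * c) by rw [hsplit], sum_range_mul]
  rw [hTsum, hdouble (fun n => (f (2^N+n) : ℝ) * g ((n:ℝ)/2^N))]
  have hQ : ∑ j ∈ Finset.range (2^k),
        ((blkS f (2^k+j) (N-k) : ℝ)/(blkS f 1 N : ℝ)) * g ((j:ℝ)/2^k)
      = (blkS f 1 N : ℝ)⁻¹ * ∑ j ∈ Finset.range (2^k), ∑ m ∈ Finset.range c,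
          (f (2^N + (j*c+m)) : ℝ) * g ((j:ℝ)/2^k) := by
    rw [Finset.mul_sum]
    refine Finset.sum_congr rfl fun j _ => ?_
    rw [hmj j, Nat.cast_sum, ← Finset.sum_mul]
    ring
  rw [hQ, ← mul_sub, ← Finset.sum_sub_distrib]
  have hinner : ∀ j, (∑ m ∈ Finset.range c, (f (2^N + (j*c+m)) : ℝ) * g ((↑(j*c+m))/2^N))
      - (∑ m ∈ Finset.range c, (f (2^N + (j*c+m)) : ℝ) * g ((j:ℝ)/2^k))
      = ∑ m ∈ Finset.range c, (f (2^N + (j*c+m)) : ℝ) * (g ((↑(j*c+m))/2^N) - g ((j:ℝ)/2^k)) := by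
    intro j
    rw [← Finset.sum_sub_distrib]
    exact Finset.sum_congr rfl fun m _ => by ring
  rw [Finset.sum_congr rfl fun j _ => hinner j]
  rw [abs_mul, abs_inv, abs_of_pos hTRpos]
  have hptwise : ∀ j ∈ Finset.range (2^k), ∀ m ∈ Finset.range c,
      |g ((↑(j*c+m) : ℝ)/2^N) - g ((j:ℝ)/2^k)| ≤ ε4 := by
    intro j hj m hm
    have hjlt := Finset.mem_range.mp hj
    have hmlt := Finset.mem_range.mp hm
    have hnlt : j*c + m < 2^N := by
      have h1 : j*c + m < (j+1)*c := by
        have := Nat.add_lt_add_left hmlt (j*c)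
        calc j*c + m < j*c + c := this
          _ = (j+1)*c := by ring
      have h2 : (j+1)*c ≤ 2^k * c := Nat.mul_le_mul_right c hjlt
      omega
    have hcR : ((c:ℕ):ℝ) = 2^(N-k) := by rw [hc]; push_cast; ring
    have hx0 : (0:ℝ) ≤ (↑(j*c+m) : ℝ)/2^N := by positivity
    have hx1 : (↑(j*c+m) : ℝ)/2^N ≤ 1 := by
      rw [div_le_one (by positivity)]
      have : ((j*c+m : ℕ) : ℝ) ≤ ((2^N : ℕ) : ℝ) := by exact_mod_cast hnlt.le
      calc (↑(j*c+m) : ℝ) ≤ ((2^N : ℕ) : ℝ) := this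
        _ = 2^N := by push_cast; ring
    have hy0 : (0:ℝ) ≤ (j:ℝ)/2^k := by positivity
    have hy1 : (j:ℝ)/2^k ≤ 1 := by
      rw [div_le_one h2k]
      have : (j:ℝ) ≤ ((2^k : ℕ) : ℝ) := by exact_mod_cast hjlt.le
      calc (j:ℝ) ≤ ((2^k : ℕ) : ℝ) := this
        _ = 2^k := by push_cast; ring
    have hdiff : (↑(j*c+m) : ℝ)/2^N - (j:ℝ)/2^k = (m:ℝ)/2^N := by
      push_cast [hcR]
      rw [hsplitR]
      field_simp
      ring
    have hdb : |(↑(j*c+m) : ℝ)/2^N - (j:ℝ)/2^k| ≤ 1/2^k := by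
      rw [hdiff, abs_of_nonneg (by positivity)]
      have hm' : (m:ℝ) ≤ 2^(N-k) := by
        rw [← hcR]; exact_mod_cast hmlt.le
      rw [div_le_div_iff₀ (by positivity) h2k, hsplitR]
      nlinarith
    exact hUC _ ⟨hx0, hx1⟩ _ ⟨hy0, hy1⟩ hdb
  have habs : |∑ j ∈ Finset.range (2^k), ∑ m ∈ Finset.range c,
        (f (2^N + (j*c+m)) : ℝ) * (g ((↑(j*c+m))/2^N) - g ((j:ℝ)/2^k))|
      ≤ ∑ j ∈ Finset.range (2^k), ∑ m ∈ Finset.range c, (f (2^N + (j*c+m)) : ℝ) * ε4 := by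
    refine (Finset.abs_sum_le_sum_abs _ _).trans ?_
    refine Finset.sum_le_sum fun j hj => ?_
    refine (Finset.abs_sum_le_sum_abs _ _).trans ?_
    refine Finset.sum_le_sum fun m hm => ?_
    rw [abs_mul, abs_of_nonneg (Nat.cast_nonneg _)]
    exact mul_le_mul_of_nonneg_left (hptwise j hj m hm) (Nat.cast_nonneg _)
  have hsum4 : ∑ j ∈ Finset.range (2^k), ∑ m ∈ Finset.range c,
      (f (2^N + (j*c+m)) : ℝ) * ε4 = (blkS f 1 N : ℝ) * ε4 := by
    rw [← hTsum, Finset.sum_mul, hdouble (fun n => (f (2^N+n) : ℝ) * ε4)]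
  calc (blkS f 1 N : ℝ)⁻¹ * |∑ j ∈ Finset.range (2^k), ∑ m ∈ Finset.range c,
        (f (2^N + (j*c+m)) : ℝ) * (g ((↑(j*c+m))/2^N) - g ((j:ℝ)/2^k))|
      ≤ (blkS f 1 N : ℝ)⁻¹ * ((blkS f 1 N : ℝ) * ε4) := by
        refine mul_le_mul_of_nonneg_left ?_ (by positivity)
        rw [← hsum4]; exact habs
    _ = ε4 := by field_simp


theorem stmt_5 (A₀ A₁ b₀ b₁ : ℕ) (hnz : ¬(A₀ = 0 ∧ A₁ = 0 ∧ b₀ = 0 ∧ b₁ = 0))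
    (f : ℕ → ℕ) (hf1 : 1 ≤ f 1)
    (heven : ∀ n, 1 ≤ n → f (2 * n) = A₀ * f n + b₀)
    (hodd : ∀ n, 1 ≤ n → f (2 * n + 1) = A₁ * f n + b₁)
    (hb : 1 ≤ b₀ + b₁) (hA : A₀ + A₁ ≤ 2) :
    WeakLimit (ghostApprox f) (volume.restrict (Set.Ico (0:ℝ) 1)) := by
  intro g
  have hT : ∀ N, 1 ≤ blkS f 1 N := one_le_blkS heven hodd hf1 hb
  rw [Metric.tendsto_atTop]
  intro ε hε
  set C : ℝ := ‖g‖ + 1 with hC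
  have hCpos : 0 < C := by have := norm_nonneg g; rw [hC]; linarith
  have hc : UniformContinuousOn (fun x => g x) (Set.Icc (0:ℝ) 1) :=
    isCompact_Icc.uniformContinuousOn_of_continuous g.continuous.continuousOn
  rw [Metric.uniformContinuousOn_iff] at hc
  obtain ⟨δ, hδpos, hδ⟩ := hc (ε/4) (by linarith)
  obtain ⟨k, hk⟩ : ∃ k : ℕ, (1/2:ℝ)^k < δ :=
    exists_pow_lt_of_lt_one hδpos (by norm_num)
  have hk' : (1:ℝ)/2^k < δ := by
    calc (1:ℝ)/2^k = (1/2)^k := by rw [div_pow, one_pow]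
      _ < δ := hk
  have hUC : ∀ x ∈ Set.Icc (0:ℝ) 1, ∀ y ∈ Set.Icc (0:ℝ) 1, |x - y| ≤ 1/2^k
      → |g x - g y| ≤ ε/4 := by
    intro x hx y hy hxy
    have := hδ x hx y hy (by rw [Real.dist_eq]; linarith)
    rw [Real.dist_eq] at this
    exact this.le
  have hlimj : ∀ j : ℕ, Tendsto
      (fun N => (blkS f (2^k+j) (N-k) : ℝ) / (blkS f 1 N : ℝ)) atTop (𝓝 (1/2^k)) := by
    intro j
    have h1 : Tendsto
        (fun M => (blkS f (2^k+j) M : ℝ) / (blkS f 1 (M+k) : ℝ)) atTop (𝓝 (1/2^k)) := by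
      have h0 := ratio_tendsto (A₀+A₁) (b₀+b₁) (f (2^k+j)) (f 1) hA hb hf1 k
      refine h0.congr fun M => ?_
      rw [blkS_eq heven hodd (Nat.one_le_iff_ne_zero.mpr (by positivity)) M,
        blkS_eq heven hodd le_rfl (M+k)]
    have h2 := h1.comp (tendsto_sub_atTop_nat k)
    refine h2.congr' ?_
    filter_upwards [eventually_ge_atTop k] with N hN
    simp only [Function.comp_apply]
    rw [Nat.sub_add_cancel hN]
  have hsumlim : Tendsto (fun N => ∑ j ∈ Finset.range (2^k),
      |(blkS f (2^k+j) (N-k) : ℝ) / (blkS f 1 N : ℝ) - 1/2^k|) atTop (𝓝 0) := by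
    have h := tendsto_finset_sum (Finset.range (2^k))
      (fun j (_ : j ∈ Finset.range (2^k)) => (((hlimj j).sub_const (1/2^k)).abs))
    simpa using h
  have hev1 : ∀ᶠ N in atTop, (∑ j ∈ Finset.range (2^k),
      |(blkS f (2^k+j) (N-k) : ℝ) / (blkS f 1 N : ℝ) - 1/2^k|) < ε/(4*C) :=
    hsumlim.eventually_lt_const (by positivity)
  obtain ⟨N₀, hN₀⟩ := Filter.eventually_atTop.mp (hev1.and (eventually_ge_atTop k))
  refine ⟨N₀, fun N hN => ?_⟩
  obtain ⟨hDS, hkN⟩ := hN₀ N hN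
  rw [Real.dist_eq, integral_ghostApprox]
  have h1 := group_estimate f g k N hkN (hT N) (ε/4) hUC
  have h3 := riemann_bound g k (ε/4) hUC
  set P : ℝ := (∑ n ∈ Finset.range (2^N), (f (2^N+n) : ℝ))⁻¹ *
      ∑ n ∈ Finset.range (2^N), (f (2^N+n) : ℝ) * g ((n:ℝ)/2^N) with hP
  set Q : ℝ := ∑ j ∈ Finset.range (2^k),
      ((blkS f (2^k+j) (N-k) : ℝ)/(blkS f 1 N : ℝ)) * g ((j:ℝ)/2^k) with hQ
  set R : ℝ := ∑ j ∈ Finset.range (2^k), (1/2^k : ℝ) * g ((j:ℝ)/2^k) with hR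
  set I : ℝ := ∫ x in Set.Ico (0:ℝ) 1, g x with hI
  have h2 : |Q - R| ≤ (∑ j ∈ Finset.range (2^k),
      |(blkS f (2^k+j) (N-k) : ℝ) / (blkS f 1 N : ℝ) - 1/2^k|) * C := by
    rw [hQ, hR, ← Finset.sum_sub_distrib]
    have heq : ∀ j ∈ Finset.range (2^k),
        ((blkS f (2^k+j) (N-k) : ℝ)/(blkS f 1 N : ℝ)) * g ((j:ℝ)/2^k)
          - (1/2^k : ℝ) * g ((j:ℝ)/2^k)
        = ((blkS f (2^k+j) (N-k) : ℝ)/(blkS f 1 N : ℝ) - 1/2^k) * g ((j:ℝ)/2^k) :=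
      fun j _ => by ring
    rw [Finset.sum_congr rfl heq]
    refine (Finset.abs_sum_le_sum_abs _ _).trans ?_
    rw [Finset.sum_mul]
    refine Finset.sum_le_sum fun j hj => ?_
    rw [abs_mul]
    refine mul_le_mul_of_nonneg_left ?_ (abs_nonneg _)
    have hg := g.norm_coe_le_norm ((j:ℝ)/2^k)
    rw [Real.norm_eq_abs] at hg
    rw [hC]; linarith
  have h2' : |Q - R| < ε/4 := by
    have hlt : (∑ j ∈ Finset.range (2^k),
        |(blkS f (2^k+j) (N-k) : ℝ) / (blkS f 1 N : ℝ) - 1/2^k|) * C < (ε/(4*C)) * C :=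
      mul_lt_mul_of_pos_right hDS hCpos
    have heq : (ε/(4*C)) * C = ε/4 := by field_simp
    linarith
  have hsplit3 : P - I = (P - Q) + (Q - R) + (R - I) := by ring
  calc |P - I| = |(P - Q) + (Q - R) + (R - I)| := by rw [hsplit3]
    _ ≤ |P - Q| + |Q - R| + |R - I| := abs_add_three _ _ _
    _ < ε := by
        have h3' : |R - I| ≤ ε/4 := h3
        linarith
end

section
/- If b₀ + b₁ ≥ 1 and A₀ = A₁ = A > 1, then the approximants μ_N converge weakly to a probability measure μ that is absolutely continuous with respect to Lebesgue measure λ on [0,1). -/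
open MeasureTheory Filter Topology

open scoped ENNReal NNReal

namespace GhostAux

variable {A b₀ b₁ : ℕ} {f : ℕ → ℕ}

/-- Values of `f` on the fundamental region, rescaled by `A^N`, as a step function on `[0,1)`. -/
noncomputable def ghF (f : ℕ → ℕ) (A : ℕ) (N : ℕ) (x : ℝ) : ℝ :=
  (f (2 ^ N + ⌊(2:ℝ) ^ N * x⌋₊) : ℝ) / (A : ℝ) ^ N

lemma key_rec (heven : ∀ n, 1 ≤ n → f (2 * n) = A * f n + b₀)
    (hodd : ∀ n, 1 ≤ n → f (2 * n + 1) = A * f n + b₁) (N m : ℕ) :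
    f (2 ^ (N + 1) + m) = A * f (2 ^ N + m / 2) + (if m % 2 = 0 then b₀ else b₁) := by
  have hp : 0 < 2 ^ N := pow_pos (by norm_num) N
  have hs : 2 ^ (N + 1) = 2 * 2 ^ N := by rw [pow_succ]; ring
  by_cases h : m % 2 = 0
  · have hm : 2 ^ (N + 1) + m = 2 * (2 ^ N + m / 2) := by omega
    rw [hm, heven _ (by omega), if_pos h]
  · have hm : 2 ^ (N + 1) + m = 2 * (2 ^ N + m / 2) + 1 := by omega
    rw [hm, hodd _ (by omega), if_neg h]

lemma floor_half (N : ℕ) (x : ℝ) :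
    ⌊(2:ℝ) ^ (N + 1) * x⌋₊ / 2 = ⌊(2:ℝ) ^ N * x⌋₊ := by
  have h := Nat.floor_div_natCast ((2:ℝ) ^ (N + 1) * x) 2
  rw [show (2:ℝ) ^ (N + 1) * x / (2:ℕ) = (2:ℝ) ^ N * x by push_cast; ring] at h
  exact h.symm

lemma ghF_succ (hA1 : 1 < A) (heven : ∀ n, 1 ≤ n → f (2 * n) = A * f n + b₀)
    (hodd : ∀ n, 1 ≤ n → f (2 * n + 1) = A * f n + b₁) (N : ℕ) (x : ℝ) :
    ghF f A (N + 1) x = ghF f A N x +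
      (if ⌊(2:ℝ) ^ (N + 1) * x⌋₊ % 2 = 0 then (b₀ : ℝ) else (b₁ : ℝ)) / (A : ℝ) ^ (N + 1) := by
  have hA0 : (1:ℝ) < (A : ℝ) := by exact_mod_cast hA1
  have hAne : (A : ℝ) ≠ 0 := by positivity
  unfold ghF
  rw [key_rec heven hodd N, floor_half]
  split_ifs with h
  · push_cast; field_simp; ring
  · push_cast; field_simp; ring

lemma ghF_nonneg (N : ℕ) (x : ℝ) : 0 ≤ ghF f A N x := by
  unfold ghF; positivity

lemma ghF_mono (hA1 : 1 < A) (heven : ∀ n, 1 ≤ n → f (2 * n) = A * f n + b₀)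
    (hodd : ∀ n, 1 ≤ n → f (2 * n + 1) = A * f n + b₁) (x : ℝ) :
    Monotone fun N => ghF f A N x := by
  apply monotone_nat_of_le_succ
  intro N
  rw [ghF_succ hA1 heven hodd]
  have hA0 : (1:ℝ) < (A : ℝ) := by exact_mod_cast hA1
  have h0 : 0 ≤ (if ⌊(2:ℝ) ^ (N + 1) * x⌋₊ % 2 = 0 then (b₀ : ℝ) else (b₁ : ℝ)) / (A : ℝ) ^ (N + 1) := by
    have : (0:ℝ) < A := by linarith
    split_ifs <;> positivity
  linarith

lemma ghF_bound (hA1 : 1 < A) (heven : ∀ n, 1 ≤ n → f (2 * n) = A * f n + b₀)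
    (hodd : ∀ n, 1 ≤ n → f (2 * n + 1) = A * f n + b₁) (N : ℕ) (x : ℝ) :
    ghF f A N x ≤ ghF f A 0 x + ((max b₀ b₁ : ℕ) : ℝ) / ((A : ℝ) - 1) := by
  have h1 : (1:ℝ) < (A : ℝ) := by exact_mod_cast hA1
  have hAne : (A : ℝ) ≠ 0 := by positivity
  have hA1ne : (A : ℝ) - 1 ≠ 0 := by linarith
  have key : ∀ M : ℕ, ghF f A M x + ((max b₀ b₁ : ℕ) : ℝ) / (((A : ℝ) - 1) * (A : ℝ) ^ M)
      ≤ ghF f A 0 x + ((max b₀ b₁ : ℕ) : ℝ) / ((A : ℝ) - 1) := by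
    intro M
    induction M with
    | zero => simp
    | succ M ih =>
      have hb : (if ⌊(2:ℝ) ^ (M + 1) * x⌋₊ % 2 = 0 then (b₀ : ℝ) else (b₁ : ℝ))
          ≤ ((max b₀ b₁ : ℕ) : ℝ) := by
        split_ifs
        · exact_mod_cast le_max_left b₀ b₁
        · exact_mod_cast le_max_right b₀ b₁
      have hstep : ghF f A (M + 1) x ≤ ghF f A M x + ((max b₀ b₁ : ℕ) : ℝ) / (A : ℝ) ^ (M + 1) := by
        rw [ghF_succ hA1 heven hodd]
        have hpow : (0:ℝ) < (A : ℝ) ^ (M + 1) := by positivity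
        gcongr
      have halg : ((max b₀ b₁ : ℕ) : ℝ) / (A : ℝ) ^ (M + 1)
          + ((max b₀ b₁ : ℕ) : ℝ) / (((A : ℝ) - 1) * (A : ℝ) ^ (M + 1))
          = ((max b₀ b₁ : ℕ) : ℝ) / (((A : ℝ) - 1) * (A : ℝ) ^ M) := by
        rw [pow_succ]
        field_simp
        ring
      linarith
  have h := key N
  have hpos : 0 ≤ ((max b₀ b₁ : ℕ) : ℝ) / (((A : ℝ) - 1) * (A : ℝ) ^ N) := by
    have hp : (0:ℝ) < (A : ℝ) ^ N := by positivity
    have : (0:ℝ) < ((A : ℝ) - 1) * (A : ℝ) ^ N := by nlinarith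
    positivity
  linarith

lemma one_le_f (hf1 : 1 ≤ f 1) (hA1 : 1 ≤ A)
    (heven : ∀ n, 1 ≤ n → f (2 * n) = A * f n + b₀)
    (hodd : ∀ n, 1 ≤ n → f (2 * n + 1) = A * f n + b₁) :
    ∀ N n, n < 2 ^ N → 1 ≤ f (2 ^ N + n) := by
  intro N
  induction N with
  | zero =>
    intro n hn
    have : n = 0 := by omega
    simpa [this] using hf1
  | succ N ih =>
    intro n hn
    rw [key_rec heven hodd]
    have hs : 2 ^ (N + 1) = 2 * 2 ^ N := by rw [pow_succ]; ring
    have h2 : n / 2 < 2 ^ N := by omega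
    have h3 := ih (n / 2) h2
    have h4 : 1 * 1 ≤ A * f (2 ^ N + n / 2) := Nat.mul_le_mul hA1 h3
    omega

lemma ghF_measurable (f : ℕ → ℕ) (A N : ℕ) : Measurable (ghF f A N) := by
  apply Measurable.div_const
  have h1 : Measurable fun x : ℝ => ⌊(2:ℝ) ^ N * x⌋₊ :=
    Nat.measurable_floor.comp (measurable_id.const_mul _)
  exact Measurable.comp (g := fun m : ℕ => ((f (2 ^ N + m) : ℕ) : ℝ)) measurable_from_top h1


lemma floor_mem_eq (N n : ℕ) {x : ℝ}
    (hx : x ∈ Set.Ico ((n : ℝ) / 2 ^ N) (((n : ℝ) + 1) / 2 ^ N)) :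
    ⌊(2:ℝ) ^ N * x⌋₊ = n := by
  have h2 : (0:ℝ) < 2 ^ N := by positivity
  obtain ⟨h1, h2'⟩ := hx
  rw [div_le_iff₀ h2] at h1
  rw [lt_div_iff₀ h2] at h2'
  have hx0 : 0 ≤ (2:ℝ) ^ N * x := by nlinarith [Nat.cast_nonneg (α := ℝ) n]
  rw [Nat.floor_eq_iff hx0]
  constructor <;> nlinarith

lemma integral_step (N : ℕ) (v : ℕ → ℝ) :
    ∫ x in Set.Ico (0:ℝ) 1, v ⌊(2:ℝ) ^ N * x⌋₊ = (∑ n ∈ Finset.range (2 ^ N), v n) / 2 ^ N := by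
  have h2 : (0:ℝ) < 2 ^ N := by positivity
  have hunion : Set.Ico (0:ℝ) 1
      = ⋃ n ∈ Finset.range (2 ^ N), Set.Ico ((n : ℝ) / 2 ^ N) (((n : ℝ) + 1) / 2 ^ N) := by
    ext x
    simp only [Set.mem_Ico, Set.mem_iUnion, Finset.mem_range, exists_prop]
    constructor
    · rintro ⟨hx0, hx1⟩
      refine ⟨⌊(2:ℝ) ^ N * x⌋₊, ?_, ?_, ?_⟩
      · have hx0' : 0 ≤ (2:ℝ) ^ N * x := by positivity
        have : (2:ℝ) ^ N * x < ((2 ^ N : ℕ) : ℝ) := by push_cast; nlinarith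
        exact (Nat.floor_lt hx0').2 this
      · rw [div_le_iff₀ h2]
        have := Nat.floor_le (show 0 ≤ (2:ℝ) ^ N * x by positivity)
        nlinarith
      · rw [lt_div_iff₀ h2]
        have := Nat.lt_floor_add_one ((2:ℝ) ^ N * x)
        nlinarith
    · rintro ⟨n, hn, h1, h2'⟩
      have hn' : ((n : ℝ) + 1) ≤ 2 ^ N := by exact_mod_cast hn
      have h0 : (0:ℝ) ≤ (n : ℝ) / 2 ^ N := by positivity
      constructor
      · linarith
      · have : ((n : ℝ) + 1) / 2 ^ N ≤ 1 := by rw [div_le_one h2]; linarith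
        linarith
  rw [hunion, integral_biUnion_finset _ (fun i _ => measurableSet_Ico) ?disj ?intg]
  · rw [Finset.sum_div]
    refine Finset.sum_congr rfl fun n _ => ?_
    rw [setIntegral_congr_fun measurableSet_Ico (fun x hx => by rw [floor_mem_eq N n hx]),
      setIntegral_const, measureReal_def, Real.volume_Ico]
    have hlen : ((n : ℝ) + 1) / 2 ^ N - (n : ℝ) / 2 ^ N = 1 / 2 ^ N := by
      field_simp
      ring
    rw [hlen, ENNReal.toReal_ofReal (by positivity), smul_eq_mul]
    ring
  case disj =>
    intro i hi j hj hij
    simp only [Function.onFun]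
    rw [Set.Ico_disjoint_Ico]
    rcases lt_or_gt_of_ne hij with h | h
    · have : ((i : ℝ) + 1) ≤ (j : ℝ) := by exact_mod_cast h
      calc min (((i:ℝ)+1)/2^N) (((j:ℝ)+1)/2^N) ≤ ((i:ℝ)+1)/2^N := min_le_left _ _
        _ ≤ (j:ℝ)/2^N := by gcongr
        _ ≤ max ((i:ℝ)/2^N) ((j:ℝ)/2^N) := le_max_right _ _
    · have : ((j : ℝ) + 1) ≤ (i : ℝ) := by exact_mod_cast h
      calc min (((i:ℝ)+1)/2^N) (((j:ℝ)+1)/2^N) ≤ ((j:ℝ)+1)/2^N := min_le_right _ _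
        _ ≤ (i:ℝ)/2^N := by gcongr
        _ ≤ max ((i:ℝ)/2^N) ((j:ℝ)/2^N) := le_max_left _ _
  case intg =>
    intro i _
    have hc : IntegrableOn (fun _ => v i) (Set.Ico ((i:ℝ)/2^N) (((i:ℝ)+1)/2^N)) volume :=
      integrableOn_const measure_Ico_lt_top.ne
    exact IntegrableOn.congr_fun hc (fun x hx => by rw [floor_mem_eq N i hx]) measurableSet_Ico

end GhostAux

theorem stmt_6 (A₀ A₁ b₀ b₁ : ℕ) (hnz : ¬(A₀ = 0 ∧ A₁ = 0 ∧ b₀ = 0 ∧ b₁ = 0))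
    (f : ℕ → ℕ) (hf1 : 1 ≤ f 1)
    (heven : ∀ n, 1 ≤ n → f (2 * n) = A₀ * f n + b₀)
    (hodd : ∀ n, 1 ≤ n → f (2 * n + 1) = A₁ * f n + b₁)
    (hb : 1 ≤ b₀ + b₁) (hA : A₀ = A₁) (hA1 : 1 < A₀) :
    ∃ μ : Measure ℝ, IsProbabilityMeasure μ ∧ WeakLimit (ghostApprox f) μ ∧
      μ ≪ volume.restrict (Set.Ico (0:ℝ) 1) := by
  subst hA
  have hA1' : (1:ℝ) < (A₀ : ℝ) := by exact_mod_cast hA1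
  have hf1R : (1:ℝ) ≤ (f 1 : ℝ) := by exact_mod_cast hf1
  set B : ℝ := ((max b₀ b₁ : ℕ) : ℝ) with hBdef
  set C : ℝ := (f 1 : ℝ) + B / ((A₀ : ℝ) - 1) with hCdef
  have hBnn : 0 ≤ B := by rw [hBdef]; positivity
  have hCpos : 0 < C := by
    have : 0 ≤ B / ((A₀ : ℝ) - 1) := div_nonneg hBnn (by linarith)
    rw [hCdef]; linarith
  -- the limit density
  set F : ℝ → ℝ := fun x => ⨆ N, GhostAux.ghF f A₀ N x with hFdef
  have hbdd : ∀ x : ℝ, BddAbove (Set.range fun N => GhostAux.ghF f A₀ N x) := by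
    intro x
    refine ⟨GhostAux.ghF f A₀ 0 x + B / ((A₀ : ℝ) - 1), ?_⟩
    rintro _ ⟨N, rfl⟩
    exact GhostAux.ghF_bound hA1 heven hodd N x
  have htend : ∀ x : ℝ, Tendsto (fun N => GhostAux.ghF f A₀ N x) atTop (𝓝 (F x)) := fun x =>
    tendsto_atTop_ciSup (GhostAux.ghF_mono hA1 heven hodd x) (hbdd x)
  have hFmeas : Measurable F :=
    measurable_of_tendsto_metrizable (fun N => GhostAux.ghF_measurable f A₀ N)
      (tendsto_pi_nhds.2 htend)
  have hF0 : ∀ x, 0 ≤ F x := fun x =>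
    ge_of_tendsto' (htend x) fun N => GhostAux.ghF_nonneg N x
  have hgh0 : ∀ x ∈ Set.Ico (0:ℝ) 1, GhostAux.ghF f A₀ 0 x = (f 1 : ℝ) := by
    intro x hx
    have h0 : ⌊x⌋₊ = 0 := Nat.floor_eq_zero.2 hx.2
    simp [GhostAux.ghF, h0]
  have hghC : ∀ x ∈ Set.Ico (0:ℝ) 1, ∀ N, GhostAux.ghF f A₀ N x ≤ C := by
    intro x hx N
    have h := GhostAux.ghF_bound hA1 heven hodd N x
    rw [hgh0 x hx] at h
    exact h
  have hghlow : ∀ x ∈ Set.Ico (0:ℝ) 1, ∀ N, (f 1 : ℝ) ≤ GhostAux.ghF f A₀ N x := by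
    intro x hx N
    have h : GhostAux.ghF f A₀ 0 x ≤ GhostAux.ghF f A₀ N x :=
      GhostAux.ghF_mono hA1 heven hodd x (Nat.zero_le N)
    rwa [hgh0 x hx] at h
  have hFC : ∀ x ∈ Set.Ico (0:ℝ) 1, F x ≤ C := fun x hx =>
    le_of_tendsto' (htend x) fun N => hghC x hx N
  have hFlow : ∀ x ∈ Set.Ico (0:ℝ) 1, (f 1 : ℝ) ≤ F x := fun x hx =>
    ge_of_tendsto' (htend x) fun N => hghlow x hx N
  have hIco : volume (Set.Ico (0:ℝ) 1) = 1 := by simp [Real.volume_Ico]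
  haveI hfin : IsFiniteMeasure (volume.restrict (Set.Ico (0:ℝ) 1)) := by
    constructor
    rw [Measure.restrict_apply_univ, hIco]
    exact ENNReal.one_lt_top
  have hintF : IntegrableOn F (Set.Ico (0:ℝ) 1) volume := by
    refine Integrable.mono' (integrable_const C) hFmeas.aestronglyMeasurable ?_
    refine ae_restrict_of_forall_mem measurableSet_Ico fun x hx => ?_
    rw [Real.norm_eq_abs, abs_of_nonneg (hF0 x)]
    exact hFC x hx
  set Z : ℝ := ∫ x in Set.Ico (0:ℝ) 1, F x with hZdef
  have hZ1 : 1 ≤ Z := by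
    have h1 : ∫ _x in Set.Ico (0:ℝ) 1, (1:ℝ) = 1 := by
      simp [setIntegral_const, hIco]
    rw [hZdef]
    refine le_trans (le_of_eq h1.symm) (setIntegral_mono_on (integrable_const 1) hintF
      measurableSet_Ico fun x hx => ?_)
    exact le_trans hf1R (hFlow x hx)
  have hZpos : 0 < Z := lt_of_lt_of_le one_pos hZ1
  set ρ : ℝ → ℝ≥0 := fun x => Real.toNNReal (F x) with hρdef
  have hρmeas : Measurable ρ := measurable_real_toNNReal.comp hFmeas
  set μ : Measure ℝ := (ENNReal.ofReal Z)⁻¹ •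
    (volume.restrict (Set.Ico (0:ℝ) 1)).withDensity (fun x => (ρ x : ℝ≥0∞)) with hμdef
  have hZ0 : ENNReal.ofReal Z ≠ 0 := (ENNReal.ofReal_pos.2 hZpos).ne'
  have hWD : (volume.restrict (Set.Ico (0:ℝ) 1)).withDensity (fun x => (ρ x : ℝ≥0∞)) Set.univ
      = ENNReal.ofReal Z := by
    rw [withDensity_apply _ MeasurableSet.univ, Measure.restrict_univ, hZdef,
      ofReal_integral_eq_lintegral_ofReal hintF (Filter.Eventually.of_forall fun x => hF0 x)]
    rfl
  have hμuniv : μ Set.univ = 1 := by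
    rw [hμdef, Measure.smul_apply, hWD, smul_eq_mul,
      ENNReal.inv_mul_cancel hZ0 ENNReal.ofReal_ne_top]
  refine ⟨μ, ⟨hμuniv⟩, ?_, ?_⟩
  swap
  · rw [hμdef]
    exact (withDensity_absolutelyContinuous _ _).smul_left _
  -- weak convergence
  intro g
  have hT : ∀ N : ℕ, (0:ℝ) < ∑ n ∈ Finset.range (2 ^ N), (f (2 ^ N + n) : ℝ) := by
    intro N
    refine Finset.sum_pos (fun i hi => ?_) ⟨0, Finset.mem_range.2 (by positivity)⟩
    have h := GhostAux.one_le_f hf1 (le_of_lt hA1) heven hodd N i (Finset.mem_range.1 hi)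
    exact_mod_cast Nat.lt_of_lt_of_le Nat.zero_lt_one h
  have key_int : ∀ N : ℕ, ∫ x, g x ∂(ghostApprox f N)
      = (∑ n ∈ Finset.range (2 ^ N), (f (2 ^ N + n) : ℝ) * g ((n : ℝ) / 2 ^ N))
        / (∑ n ∈ Finset.range (2 ^ N), (f (2 ^ N + n) : ℝ)) := by
    intro N
    unfold ghostApprox
    rw [integral_smul_measure,
      integral_finset_sum_measure
        (fun i _ => (g.integrable _).smul_measure (ENNReal.natCast_ne_top _))]
    simp only [integral_smul_measure, integral_dirac, ENNReal.toReal_natCast, smul_eq_mul]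
    rw [← Nat.cast_sum, ENNReal.toReal_inv, ENNReal.toReal_natCast, inv_mul_eq_div]
    push_cast
    rfl
  set num : ℕ → ℝ := fun N => ∫ x in Set.Ico (0:ℝ) 1,
      GhostAux.ghF f A₀ N x * g ((⌊(2:ℝ) ^ N * x⌋₊ : ℝ) / 2 ^ N) with hnumdef
  set den : ℕ → ℝ := fun N => ∫ x in Set.Ico (0:ℝ) 1, GhostAux.ghF f A₀ N x with hdendef
  have hpow2 : ∀ N : ℕ, (0:ℝ) < 2 ^ N := fun N => by positivity
  have hpowA : ∀ N : ℕ, (0:ℝ) < (A₀ : ℝ) ^ N := fun N => by positivity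
  have hden_eq : ∀ N, den N = (∑ n ∈ Finset.range (2 ^ N), (f (2 ^ N + n) : ℝ))
      / ((A₀ : ℝ) ^ N * 2 ^ N) := by
    intro N
    have h := GhostAux.integral_step N (fun m => (f (2 ^ N + m) : ℝ) / (A₀ : ℝ) ^ N)
    rw [hdendef]
    simp only [GhostAux.ghF]
    rw [h, ← Finset.sum_div, div_div]
  have hnum_eq : ∀ N, num N
      = (∑ n ∈ Finset.range (2 ^ N), (f (2 ^ N + n) : ℝ) * g ((n : ℝ) / 2 ^ N))
        / ((A₀ : ℝ) ^ N * 2 ^ N) := by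
    intro N
    have h := GhostAux.integral_step N
      (fun m => (f (2 ^ N + m) : ℝ) / (A₀ : ℝ) ^ N * g ((m : ℝ) / 2 ^ N))
    rw [hnumdef]
    simp only [GhostAux.ghF]
    rw [h]
    rw [show (∑ n ∈ Finset.range (2 ^ N),
        (f (2 ^ N + n) : ℝ) / (A₀ : ℝ) ^ N * g ((n : ℝ) / 2 ^ N))
      = (∑ n ∈ Finset.range (2 ^ N), (f (2 ^ N + n) : ℝ) * g ((n : ℝ) / 2 ^ N)) / (A₀ : ℝ) ^ N by
        rw [Finset.sum_div]
        exact Finset.sum_congr rfl fun n _ => by ring]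
    rw [div_div]
  have hratio : ∀ N, ∫ x, g x ∂(ghostApprox f N) = num N / den N := by
    intro N
    have hc : ((A₀ : ℝ) ^ N * 2 ^ N) ≠ 0 := by positivity
    rw [key_int N, hnum_eq N, hden_eq N, div_div_div_comm, div_self hc, div_one]
  have hdent : Tendsto den atTop (𝓝 Z) := by
    rw [hdendef, hZdef]
    refine tendsto_integral_of_dominated_convergence (fun _ => C)
      (fun N => (GhostAux.ghF_measurable f A₀ N).aestronglyMeasurable)
      (integrable_const C) (fun N => ?_) ?_
    · refine ae_restrict_of_forall_mem measurableSet_Ico fun x hx => ?_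
      rw [Real.norm_eq_abs, abs_of_nonneg (GhostAux.ghF_nonneg N x)]
      exact hghC x hx N
    · exact Filter.Eventually.of_forall htend
  have hfl : ∀ x : ℝ, 0 ≤ x →
      Tendsto (fun N : ℕ => ((⌊(2:ℝ) ^ N * x⌋₊ : ℝ) / 2 ^ N)) atTop (𝓝 x) := by
    intro x hx
    have hlow : Tendsto (fun N : ℕ => x - (1/2:ℝ) ^ N) atTop (𝓝 x) := by
      have h := tendsto_pow_atTop_nhds_zero_of_lt_one (by norm_num : (0:ℝ) ≤ 1/2)
        (by norm_num : (1/2:ℝ) < 1)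
      simpa using tendsto_const_nhds.sub h
    refine tendsto_of_tendsto_of_tendsto_of_le_of_le hlow tendsto_const_nhds ?_ ?_
    · intro N
      rw [le_div_iff₀ (hpow2 N)]
      have h1 : (1/2:ℝ) ^ N * 2 ^ N = 1 := by rw [← mul_pow]; norm_num
      have h2 := Nat.sub_one_lt_floor ((2:ℝ) ^ N * x)
      nlinarith
    · intro N
      rw [div_le_iff₀ (hpow2 N)]
      have h2 := Nat.floor_le (show 0 ≤ (2:ℝ) ^ N * x by positivity)
      nlinarith
  have hnumt : Tendsto num atTop (𝓝 (∫ x in Set.Ico (0:ℝ) 1, F x * g x)) := by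
    rw [hnumdef]
    have hmf : ∀ N : ℕ, Measurable fun x : ℝ => ((⌊(2:ℝ) ^ N * x⌋₊ : ℝ) / 2 ^ N) := by
      intro N
      have h1 : Measurable fun x : ℝ => ⌊(2:ℝ) ^ N * x⌋₊ :=
        Nat.measurable_floor.comp (measurable_id.const_mul _)
      exact Measurable.comp (g := fun m : ℕ => ((m : ℝ) / 2 ^ N)) measurable_from_top h1
    refine tendsto_integral_of_dominated_convergence (fun _ => C * ‖g‖)
      (fun N => ((GhostAux.ghF_measurable f A₀ N).mul
        (g.continuous.measurable.comp (hmf N))).aestronglyMeasurable)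
      (integrable_const _) (fun N => ?_) ?_
    · refine ae_restrict_of_forall_mem measurableSet_Ico fun x hx => ?_
      rw [norm_mul]
      have h1 : ‖GhostAux.ghF f A₀ N x‖ ≤ C := by
        rw [Real.norm_eq_abs, abs_of_nonneg (GhostAux.ghF_nonneg N x)]
        exact hghC x hx N
      exact mul_le_mul h1 (g.norm_coe_le_norm _) (norm_nonneg _) (le_of_lt hCpos)
    · refine ae_restrict_of_forall_mem measurableSet_Ico fun x hx => ?_
      exact (htend x).mul ((g.continuous.tendsto x).comp (hfl x hx.1))
  have hlim : Tendsto (fun N => num N / den N) atTop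
      (𝓝 ((∫ x in Set.Ico (0:ℝ) 1, F x * g x) / Z)) :=
    hnumt.div hdent (ne_of_gt hZpos)
  have hμint : ∫ x, g x ∂μ = (∫ x in Set.Ico (0:ℝ) 1, F x * g x) / Z := by
    rw [hμdef, integral_smul_measure, integral_withDensity_eq_integral_smul hρmeas,
      ENNReal.toReal_inv, ENNReal.toReal_ofReal hZpos.le, smul_eq_mul, inv_mul_eq_div]
    congr 1
    refine integral_congr_ae (Filter.Eventually.of_forall fun x => ?_)
    rw [hρdef]
    simp [NNReal.smul_def, Real.coe_toNNReal _ (hF0 x)]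
  rw [hμint]
  exact Tendsto.congr (fun N => (hratio N).symm) hlim
end

section
/- Suppose b₀ + b₁ ≥ 1 and A₀ = A₁ = A > 1, and let μ be the ghost measure of f (the weak limit of the μ_N). Then for every Borel set E ⊆ [0,1), μ(E) = ∫_E g(x) dλ(x), where g(x) = (f(1) + Σ_{j=1}^∞ b_{d_j(x)} / A^j) / (f(1) + (b₀ + b₁)/(2A − 2)) and d_j(x) = ⌊2^j x⌋ mod 2 is the j-th binary digit of x. -/
open MeasureTheory Filter Topology
open scoped NNReal ENNReal

namespace Stmt7Aux

noncomputable def bterm (b₀ b₁ : ℕ) (j : ℕ) (x : ℝ) : ℝ :=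
  if ⌊(2:ℝ) ^ (j + 1) * x⌋ % 2 = 0 then (b₀ : ℝ) else (b₁ : ℝ)

lemma bterm_nonneg (b₀ b₁ j : ℕ) (x : ℝ) : 0 ≤ bterm b₀ b₁ j x := by
  unfold bterm; split <;> positivity

lemma bterm_le (b₀ b₁ j : ℕ) (x : ℝ) : bterm b₀ b₁ j x ≤ (b₀:ℝ) + b₁ := by
  have h0 : (0:ℝ) ≤ (b₀:ℝ) := Nat.cast_nonneg _
  have h1 : (0:ℝ) ≤ (b₁:ℝ) := Nat.cast_nonneg _
  unfold bterm; split <;> linarith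

lemma measurable_bterm (b₀ b₁ j : ℕ) : Measurable (bterm b₀ b₁ j) := by
  unfold bterm
  refine Measurable.ite ?_ measurable_const measurable_const
  have h1 : Measurable fun x : ℝ => ⌊(2:ℝ)^(j+1) * x⌋ :=
    Int.measurable_floor.comp (measurable_const_mul _)
  have hm : Measurable fun x : ℝ => (⌊(2:ℝ)^(j+1) * x⌋ % 2) :=
    (measurable_from_top (f := fun z : ℤ => z % 2)).comp h1
  exact hm (measurableSet_singleton 0)

/-- floor of a point in `[n/q, (n+1)/q)` is `n/q` (nat division). -/
lemma floor_of_mem_Ico {q n : ℕ} (hq : 0 < q) {y : ℝ}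
    (hy : y ∈ Set.Ico ((n:ℝ)/q) (((n:ℝ)+1)/q)) :
    ⌊y⌋ = ((n / q : ℕ) : ℤ) := by
  have hqR : (0:ℝ) < q := by exact_mod_cast hq
  rw [Int.floor_eq_iff]
  constructor
  · calc ((( n / q : ℕ) : ℤ) : ℝ) = ((n / q : ℕ) : ℝ) := Int.cast_natCast _
      _ ≤ (n:ℝ)/q := Nat.cast_div_le
      _ ≤ y := hy.1
  · have key : (n:ℝ) + 1 ≤ q * ((n / q : ℕ) + 1 : ℕ) := by
      have h1 : n + 1 ≤ q * (n / q + 1) := by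
        have := Nat.div_add_mod n q
        have := Nat.mod_lt n hq
        nlinarith
      exact_mod_cast h1
    calc y < ((n:ℝ)+1)/q := hy.2
      _ ≤ ((n / q : ℕ) : ℝ) + 1 := by
          rw [div_le_iff₀ hqR]
          calc (n:ℝ) + 1 ≤ q * ((n / q : ℕ) + 1 : ℕ) := key
            _ = (((n / q : ℕ) : ℝ) + 1) * q := by push_cast; ring
      _ = (((n / q : ℕ) : ℤ) : ℝ) + 1 := by rw [Int.cast_natCast]

section Geom

variable {b₀ b₁ A : ℕ}

lemma bterm_div_le (hA : 2 ≤ A) (j : ℕ) (x : ℝ) :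
    bterm b₀ b₁ j x / (A:ℝ)^(j+1) ≤ (((b₀:ℝ)+b₁) * (A:ℝ)⁻¹) * ((A:ℝ)⁻¹)^j := by
  have hA0 : (0:ℝ) < A := by exact_mod_cast (by omega : 0 < A)
  have h1 : bterm b₀ b₁ j x / (A:ℝ)^(j+1) ≤ ((b₀:ℝ)+b₁) / (A:ℝ)^(j+1) :=
    (div_le_div_iff_of_pos_right (pow_pos hA0 _)).mpr (bterm_le _ _ _ _)
  calc bterm b₀ b₁ j x / (A:ℝ)^(j+1) ≤ ((b₀:ℝ)+b₁) / (A:ℝ)^(j+1) := h1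
    _ = (((b₀:ℝ)+b₁) * (A:ℝ)⁻¹) * ((A:ℝ)⁻¹)^j := by
        rw [div_eq_mul_inv, ← inv_pow, pow_succ']; ring

lemma inv_lt_one_of_two_le (hA : 2 ≤ A) : (A:ℝ)⁻¹ < 1 := by
  have : (1:ℝ) < A := by exact_mod_cast lt_of_lt_of_le one_lt_two (by exact_mod_cast hA)
  rw [inv_lt_one_iff₀]; right; exact this

lemma summable_geom_aux (hA : 2 ≤ A) :
    Summable (fun j : ℕ => (((b₀:ℝ)+b₁) * (A:ℝ)⁻¹) * ((A:ℝ)⁻¹)^j) :=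
  (summable_geometric_of_lt_one (by positivity) (inv_lt_one_of_two_le hA)).mul_left _

lemma summable_bterm (hA : 2 ≤ A) (x : ℝ) :
    Summable (fun j => bterm b₀ b₁ j x / (A:ℝ)^(j+1)) := by
  exact Summable.of_nonneg_of_le
    (fun j => div_nonneg (bterm_nonneg _ _ _ _) (by positivity))
    (fun j => bterm_div_le hA j x) (summable_geom_aux (b₀ := b₀) (b₁ := b₁) hA)

lemma tsum_geom_aux (hA : 2 ≤ A) :
    ∑' j : ℕ, (((b₀:ℝ)+b₁) * (A:ℝ)⁻¹) * ((A:ℝ)⁻¹)^j = ((b₀:ℝ)+b₁) / ((A:ℝ) - 1) := by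
  have hA1 : (1:ℝ) < A := by exact_mod_cast lt_of_lt_of_le one_lt_two (by exact_mod_cast hA)
  rw [tsum_mul_left, tsum_geometric_of_lt_one (by positivity) (inv_lt_one_of_two_le hA)]
  have h1 : (A:ℝ) ≠ 0 := by positivity
  have h2 : (A:ℝ) - 1 ≠ 0 := by linarith
  field_simp

lemma sum_bterm_le (hA : 2 ≤ A) (x : ℝ) (s : Finset ℕ) :
    ∑ j ∈ s, bterm b₀ b₁ j x / (A:ℝ)^(j+1) ≤ ((b₀:ℝ)+b₁) / ((A:ℝ) - 1) := by
  calc ∑ j ∈ s, bterm b₀ b₁ j x / (A:ℝ)^(j+1)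
      ≤ ∑ j ∈ s, (((b₀:ℝ)+b₁) * (A:ℝ)⁻¹) * ((A:ℝ)⁻¹)^j :=
        Finset.sum_le_sum (fun j _ => bterm_div_le hA j x)
    _ ≤ ∑' j : ℕ, (((b₀:ℝ)+b₁) * (A:ℝ)⁻¹) * ((A:ℝ)⁻¹)^j :=
        Summable.sum_le_tsum s (fun j _ => by positivity) (summable_geom_aux hA)
    _ = ((b₀:ℝ)+b₁) / ((A:ℝ) - 1) := tsum_geom_aux hA

lemma tsum_bterm_le (hA : 2 ≤ A) (x : ℝ) :
    ∑' j, bterm b₀ b₁ j x / (A:ℝ)^(j+1) ≤ ((b₀:ℝ)+b₁) / ((A:ℝ) - 1) := by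
  rw [← tsum_geom_aux (b₀ := b₀) (b₁ := b₁) hA]
  exact Summable.tsum_le_tsum (fun j => bterm_div_le hA j x) (summable_bterm hA x) (summable_geom_aux hA)

lemma tsum_bterm_nonneg (hA : 2 ≤ A) (x : ℝ) :
    0 ≤ ∑' j, bterm b₀ b₁ j x / (A:ℝ)^(j+1) :=
  tsum_nonneg (fun j => div_nonneg (bterm_nonneg _ _ _ _) (by positivity))

end Geom

noncomputable def numv (b₀ b₁ A : ℕ) (N n : ℕ) : ℝ :=
  ∑ j ∈ Finset.range N, (if (n / 2^(N-(j+1))) % 2 = 0 then (b₀:ℝ) else (b₁:ℝ)) / (A:ℝ)^(j+1)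

lemma bterm_on_piece (b₀ b₁ : ℕ) {N j n : ℕ} (hj : j < N) {x : ℝ}
    (hx : x ∈ Set.Ico ((n:ℝ)/2^N) (((n:ℝ)+1)/2^N)) :
    bterm b₀ b₁ j x = (if (n / 2^(N-(j+1))) % 2 = 0 then (b₀:ℝ) else (b₁:ℝ)) := by
  have hq : 0 < 2^(N-(j+1)) := Nat.pow_pos (by norm_num)
  have h2 : (0:ℝ) < (2:ℝ)^(j+1) := by positivity
  have hpow : ((2:ℝ))^N = (2:ℝ)^(j+1) * (2:ℝ)^(N-(j+1)) := by
    rw [← pow_add]; congr 1; omega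
  have hy : (2:ℝ)^(j+1) * x ∈
      Set.Ico ((n:ℝ)/((2^(N-(j+1)):ℕ):ℝ)) (((n:ℝ)+1)/((2^(N-(j+1)):ℕ):ℝ)) := by
    have e1 : (2:ℝ)^(j+1) * ((n:ℝ)/2^N) = (n:ℝ)/((2^(N-(j+1)):ℕ):ℝ) := by
      push_cast; rw [hpow]; field_simp
    have e2 : (2:ℝ)^(j+1) * (((n:ℝ)+1)/2^N) = ((n:ℝ)+1)/((2^(N-(j+1)):ℕ):ℝ) := by
      push_cast; rw [hpow]; field_simp
    constructor
    · rw [← e1]; exact mul_le_mul_of_nonneg_left hx.1 h2.le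
    · rw [← e2]; exact (mul_lt_mul_iff_right₀ h2).mpr hx.2
  have key := floor_of_mem_Ico hq hy
  unfold bterm
  rw [key]
  have hiff : (((n / 2^(N-(j+1)) : ℕ) : ℤ) % 2 = 0) ↔ ((n / 2^(N-(j+1))) % 2 = 0) := by
    omega
  rw [if_congr hiff rfl rfl]

lemma f_formula {A b₀ b₁ : ℕ} (hA : 2 ≤ A) (f : ℕ → ℕ)
    (heven : ∀ n, 1 ≤ n → f (2 * n) = A * f n + b₀)
    (hodd : ∀ n, 1 ≤ n → f (2 * n + 1) = A * f n + b₁) :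
    ∀ N n, n < 2^N → (f (2^N + n) : ℝ) = (A:ℝ)^N * ((f 1 : ℝ) + numv b₀ b₁ A N n) := by
  have haR : (A:ℝ) ≠ 0 := by
    have : (0:ℝ) < A := by exact_mod_cast (by omega : 0 < A)
    exact this.ne'
  intro N
  induction N with
  | zero =>
    intro n hn
    interval_cases n
    simp [numv]
  | succ N ih =>
    intro n hn
    have hp : 2^(N+1) = 2*2^N := by rw [pow_succ]; ring
    have hm : n / 2 < 2^N := by omega
    have hrec : numv b₀ b₁ A (N+1) n
        = numv b₀ b₁ A N (n/2) + (if n % 2 = 0 then (b₀:ℝ) else (b₁:ℝ)) / (A:ℝ)^(N+1) := by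
      unfold numv
      rw [Finset.sum_range_succ]
      congr 1
      · apply Finset.sum_congr rfl
        intro j hj
        have hj' : j < N := Finset.mem_range.mp hj
        have hidx : n / 2^(N+1-(j+1)) = (n/2) / 2^(N-(j+1)) := by
          have h1 : N+1-(j+1) = (N-(j+1))+1 := by omega
          rw [h1, pow_succ', Nat.div_div_eq_div_mul]
        rw [hidx]
      · norm_num
    have h1 : 1 ≤ 2^N + n/2 := by
      have := Nat.one_le_two_pow (n := N); omega
    rcases Nat.mod_two_eq_zero_or_one n with hr | hr
    · have hidx : 2^(N+1) + n = 2*(2^N + n/2) := by omega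
      rw [hidx, heven _ h1, hrec, if_pos hr]
      push_cast
      rw [ih _ hm]
      field_simp
      ring
    · have hidx : 2^(N+1) + n = 2*(2^N + n/2) + 1 := by omega
      rw [hidx, hodd _ h1, hrec, if_neg (by omega)]
      push_cast
      rw [ih _ hm]
      field_simp
      ring

lemma sum_range_two_mul (F : ℕ → ℝ) (m : ℕ) :
    ∑ n ∈ Finset.range (2*m), F n = ∑ i ∈ Finset.range m, (F (2*i) + F (2*i+1)) := by
  induction m with
  | zero => simp
  | succ m ih =>
    have h : 2*(m+1) = (2*m)+1+1 := by ring
    rw [h, Finset.sum_range_succ, Finset.sum_range_succ, ih, Finset.sum_range_succ]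
    ring

lemma S_formula {A b₀ b₁ : ℕ} (hA : 2 ≤ A) (f : ℕ → ℕ)
    (heven : ∀ n, 1 ≤ n → f (2 * n) = A * f n + b₀)
    (hodd : ∀ n, 1 ≤ n → f (2 * n + 1) = A * f n + b₁) (N : ℕ) :
    ∑ n ∈ Finset.range (2^N), (f (2^N + n) : ℝ)
      = 2^N * (A:ℝ)^N *
          ((f 1:ℝ) + ((b₀:ℝ)+(b₁:ℝ)) * (1 - ((A:ℝ)⁻¹)^N) / (2*((A:ℝ)-1))) := by
  have haR : (0:ℝ) < A := by exact_mod_cast (by omega : 0 < A)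
  have ha1 : (A:ℝ) - 1 ≠ 0 := by
    have : (1:ℝ) < A := by exact_mod_cast (by omega : 1 < A)
    intro h; linarith
  induction N with
  | zero => norm_num
  | succ N ih =>
    have hp : 2^(N+1) = 2*2^N := by rw [pow_succ]; ring
    rw [hp, sum_range_two_mul (fun n => (f (2*2^N + n) : ℝ))]
    have key : ∀ i ∈ Finset.range (2^N),
        ((f (2*2^N + 2*i) : ℝ) + (f (2*2^N + (2*i+1)) : ℝ))
          = 2*(A:ℝ)*((f (2^N + i):ℝ)) + ((b₀:ℝ)+(b₁:ℝ)) := by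
      intro i hi
      have h1 : 1 ≤ 2^N + i := by
        have := Nat.one_le_two_pow (n := N); omega
      have e1 : 2*2^N + 2*i = 2*(2^N+i) := by ring
      have e2 : 2*2^N + (2*i+1) = 2*(2^N+i)+1 := by ring
      rw [e1, e2, heven _ h1, hodd _ h1]
      push_cast
      ring
    rw [Finset.sum_congr rfl key, Finset.sum_add_distrib, Finset.sum_const,
      Finset.card_range, ← Finset.mul_sum, ih]
    have hpw : ((A:ℝ)⁻¹)^N = ((A:ℝ)^N)⁻¹ := inv_pow _ _
    have hpw1 : ((A:ℝ)⁻¹)^(N+1) = ((A:ℝ)^(N+1))⁻¹ := inv_pow _ _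
    have hpn : ((A:ℝ)^N) ≠ 0 := pow_ne_zero _ haR.ne'
    have hpn1 : ((A:ℝ)^(N+1)) ≠ 0 := pow_ne_zero _ haR.ne'
    rw [hpw, hpw1]
    push_cast
    field_simp
    ring

noncomputable def numfN (b₀ b₁ A : ℕ) (N : ℕ) (x : ℝ) : ℝ :=
  ∑ j ∈ Finset.range N, bterm b₀ b₁ j x / (A:ℝ)^(j+1)

lemma numfN_on_piece (b₀ b₁ A : ℕ) {N n : ℕ} {x : ℝ}
    (hx : x ∈ Set.Ico ((n:ℝ)/2^N) (((n:ℝ)+1)/2^N)) :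
    numfN b₀ b₁ A N x = numv b₀ b₁ A N n := by
  unfold numfN numv
  apply Finset.sum_congr rfl
  intro j hj
  rw [bterm_on_piece b₀ b₁ (Finset.mem_range.mp hj) hx]

lemma floor_two_pow_on_piece {N n : ℕ} (hn : n < 2^N) {x : ℝ}
    (hx : x ∈ Set.Ico ((n:ℝ)/2^N) (((n:ℝ)+1)/2^N)) :
    ⌊(2:ℝ)^N * x⌋ = (n:ℤ) := by
  have h2 : (0:ℝ) < (2:ℝ)^N := by positivity
  rw [Int.floor_eq_iff]
  constructor
  · push_cast
    calc (n:ℝ) = (2:ℝ)^N * ((n:ℝ)/2^N) := by field_simp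
      _ ≤ (2:ℝ)^N * x := mul_le_mul_of_nonneg_left hx.1 h2.le
  · push_cast
    calc (2:ℝ)^N * x < (2:ℝ)^N * (((n:ℝ)+1)/2^N) := (mul_lt_mul_iff_right₀ h2).mpr hx.2
      _ = (n:ℝ) + 1 := by field_simp

lemma Ico_eq_biUnion (N : ℕ) :
    Set.Ico (0:ℝ) 1
      = ⋃ n ∈ Finset.range (2^N), Set.Ico ((n:ℝ)/2^N) (((n:ℝ)+1)/2^N) := by
  have h2 : (0:ℝ) < (2:ℝ)^N := by positivity
  ext x
  simp only [Set.mem_Ico, Set.mem_iUnion, Finset.mem_range]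
  constructor
  · rintro ⟨hx0, hx1⟩
    refine ⟨⌊(2:ℝ)^N * x⌋₊, ?_, ?_, ?_⟩
    · have : (2:ℝ)^N * x < (2:ℝ)^N * 1 := by
        exact (mul_lt_mul_iff_right₀ h2).mpr hx1
      have hlt : (2:ℝ)^N * x < ((2^N : ℕ) : ℝ) := by push_cast; linarith
      exact (Nat.floor_lt (by positivity : (0:ℝ) ≤ (2:ℝ)^N * x)).mpr hlt
    · rw [div_le_iff₀ h2]
      calc ((⌊(2:ℝ)^N * x⌋₊ : ℝ)) ≤ (2:ℝ)^N * x := Nat.floor_le (by positivity)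
        _ = x * 2^N := by ring
    · rw [lt_div_iff₀ h2]
      calc x * 2^N = (2:ℝ)^N * x := by ring
        _ < (⌊(2:ℝ)^N * x⌋₊ : ℝ) + 1 := Nat.lt_floor_add_one _
  · rintro ⟨n, hn, hx1, hx2⟩
    have hn' : ((n:ℝ)+1) ≤ ((2^N : ℕ):ℝ) := by exact_mod_cast hn
    constructor
    · have : (0:ℝ) ≤ (n:ℝ)/2^N := by positivity
      linarith
    · calc x < ((n:ℝ)+1)/2^N := hx2
        _ ≤ 1 := by rw [div_le_one h2]; push_cast at hn' ⊢; linarith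

lemma pieces_disjoint (N : ℕ) {i j : ℕ} (hij : i ≠ j) :
    Disjoint (Set.Ico ((i:ℝ)/2^N) (((i:ℝ)+1)/2^N))
      (Set.Ico ((j:ℝ)/2^N) (((j:ℝ)+1)/2^N)) := by
  have h2 : (0:ℝ) < (2:ℝ)^N := by positivity
  rw [Set.Ico_disjoint_Ico]
  rcases Nat.lt_or_ge i j with h | h
  · have : ((i:ℝ)+1) ≤ (j:ℝ) := by exact_mod_cast h
    calc min (((i:ℝ)+1)/2^N) (((j:ℝ)+1)/2^N) ≤ ((i:ℝ)+1)/2^N := min_le_left _ _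
      _ ≤ (j:ℝ)/2^N := by gcongr
      _ ≤ max ((i:ℝ)/2^N) ((j:ℝ)/2^N) := le_max_right _ _
  · have hj : j < i := by omega
    have : ((j:ℝ)+1) ≤ (i:ℝ) := by exact_mod_cast hj
    calc min (((i:ℝ)+1)/2^N) (((j:ℝ)+1)/2^N) ≤ ((j:ℝ)+1)/2^N := min_le_right _ _
      _ ≤ (i:ℝ)/2^N := by gcongr
      _ ≤ max ((i:ℝ)/2^N) ((j:ℝ)/2^N) := le_max_left _ _

lemma integral_piecewise (N : ℕ) (G : ℝ → ℝ) (v : ℕ → ℝ)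
    (hG : ∀ n : ℕ, n < 2^N → ∀ x ∈ Set.Ico ((n:ℝ)/2^N) (((n:ℝ)+1)/2^N), G x = v n) :
    ∫ x in Set.Ico (0:ℝ) 1, G x = ∑ n ∈ Finset.range (2^N), v n / 2^N := by
  have h2 : (0:ℝ) < (2:ℝ)^N := by positivity
  have hmeas : ∀ n ∈ Finset.range (2^N),
      MeasurableSet (Set.Ico ((n:ℝ)/2^N) (((n:ℝ)+1)/2^N)) := fun n _ => measurableSet_Ico
  have hdisj : Set.Pairwise (Finset.range (2^N) : Set ℕ)
      (Function.onFun Disjoint fun n => Set.Ico ((n:ℝ)/2^N) (((n:ℝ)+1)/2^N)) :=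
    fun i _ j _ hij => pieces_disjoint N hij
  have hint : ∀ n ∈ Finset.range (2^N),
      IntegrableOn G (Set.Ico ((n:ℝ)/2^N) (((n:ℝ)+1)/2^N)) := by
    intro n hn
    refine ((integrableOn_const (C := v n)
      measure_Ico_lt_top.ne)).congr_fun ?_ measurableSet_Ico
    exact fun x hx => (hG n (Finset.mem_range.mp hn) x hx).symm
  rw [Ico_eq_biUnion N, integral_biUnion_finset _ hmeas hdisj hint]
  apply Finset.sum_congr rfl
  intro n hn
  rw [setIntegral_congr_fun measurableSet_Ico (fun x hx => hG n (Finset.mem_range.mp hn) x hx),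
    setIntegral_const]
  rw [measureReal_def, Real.volume_Ico]
  have he : ((n:ℝ)+1)/2^N - (n:ℝ)/2^N = 1/2^N := by field_simp; ring
  rw [he, ENNReal.toReal_ofReal (by positivity)]
  rw [smul_eq_mul]
  ring

lemma ghost_integral (f : ℕ → ℕ) (N : ℕ) (h : BoundedContinuousFunction ℝ ℝ) :
    ∫ x, h x ∂(ghostApprox f N)
      = (∑ n ∈ Finset.range (2^N), (f (2^N + n) : ℝ))⁻¹ *
          ∑ n ∈ Finset.range (2^N), (f (2^N + n) : ℝ) * h ((n:ℝ)/2^N) := by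
  have hc : ((∑ n ∈ Finset.range (2 ^ N), (f (2 ^ N + n) : ENNReal))).toReal
      = ∑ n ∈ Finset.range (2^N), (f (2^N + n) : ℝ) := by
    rw [ENNReal.toReal_sum (fun a _ => ENNReal.natCast_ne_top _)]
    simp
  unfold ghostApprox
  rw [integral_smul_measure, ENNReal.toReal_inv, hc,
    integral_finset_sum_measure
      (fun i _ => (h.integrable _).smul_measure (ENNReal.natCast_ne_top _))]
  rw [smul_eq_mul]
  congr 1
  apply Finset.sum_congr rfl
  intro n hn
  rw [integral_smul_measure, integral_dirac]
  simp

noncomputable def DnF (c : ℝ) (b₀ b₁ A : ℕ) (N : ℕ) : ℝ :=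
  c + ((b₀:ℝ)+(b₁:ℝ)) * (1 - ((A:ℝ)⁻¹)^N) / (2*((A:ℝ)-1))

lemma DnF_ge {c : ℝ} (hc : 1 ≤ c) {A : ℕ} (hA : 2 ≤ A) (b₀ b₁ N : ℕ) :
    1 ≤ DnF c b₀ b₁ A N := by
  have haR : (1:ℝ) < A := by exact_mod_cast (by omega : 1 < A)
  have h1 : ((A:ℝ)⁻¹)^N ≤ 1 :=
    pow_le_one₀ (by positivity) (by rw [inv_le_one_iff₀]; right; exact haR.le)
  have h2 : (0:ℝ) ≤ ((b₀:ℝ)+(b₁:ℝ)) * (1 - ((A:ℝ)⁻¹)^N) / (2*((A:ℝ)-1)) := by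
    apply div_nonneg (mul_nonneg (by positivity) (by linarith)) (by linarith)
  unfold DnF
  linarith

lemma tendsto_DnF {c : ℝ} {A : ℕ} (hA : 2 ≤ A) (b₀ b₁ : ℕ) :
    Tendsto (fun N => DnF c b₀ b₁ A N) atTop
      (𝓝 (c + ((b₀:ℝ)+(b₁:ℝ)) / (2*(A:ℝ)-2))) := by
  have haR : (1:ℝ) < A := by exact_mod_cast (by omega : 1 < A)
  have hpow : Tendsto (fun N : ℕ => ((A:ℝ)⁻¹)^N) atTop (𝓝 0) :=
    tendsto_pow_atTop_nhds_zero_of_lt_one (by positivity) (inv_lt_one_of_two_le hA)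
  have h1 : Tendsto (fun N => DnF c b₀ b₁ A N) atTop
      (𝓝 (c + ((b₀:ℝ)+(b₁:ℝ)) * (1 - 0) / (2*((A:ℝ)-1)))) := by
    unfold DnF
    exact tendsto_const_nhds.add
      (((tendsto_const_nhds.sub hpow).const_mul _).div_const _)
  convert h1 using 2
  ring

noncomputable def psi (c : ℝ) (b₀ b₁ A : ℕ) (h : ℝ → ℝ) (N : ℕ) (x : ℝ) : ℝ :=
  (c + numfN b₀ b₁ A N x) / DnF c b₀ b₁ A N * h ((⌊(2:ℝ)^N * x⌋ : ℝ) / 2^N)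

lemma ghost_eq_integral_psi {b₀ b₁ A : ℕ} (hA : 2 ≤ A) (f : ℕ → ℕ) (hf1 : 1 ≤ f 1)
    (heven : ∀ n, 1 ≤ n → f (2 * n) = A * f n + b₀)
    (hodd : ∀ n, 1 ≤ n → f (2 * n + 1) = A * f n + b₁)
    (h : BoundedContinuousFunction ℝ ℝ) (N : ℕ) :
    ∫ x, h x ∂(ghostApprox f N)
      = ∫ x in Set.Ico (0:ℝ) 1, psi ((f 1 : ℝ)) b₀ b₁ A h N x := by
  have hc : (1:ℝ) ≤ (f 1 : ℝ) := by exact_mod_cast hf1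
  have hDn : 1 ≤ DnF ((f 1 : ℝ)) b₀ b₁ A N := DnF_ge hc hA b₀ b₁ N
  have haR : (0:ℝ) < A := by exact_mod_cast (by omega : 0 < A)
  have hpp : (0:ℝ) < (2:ℝ)^N := by positivity
  rw [ghost_integral,
    integral_piecewise N _
      (fun n => ((f 1:ℝ) + numv b₀ b₁ A N n) / DnF ((f 1 : ℝ)) b₀ b₁ A N * h ((n:ℝ)/2^N))
      ?_]
  · rw [S_formula hA f heven hodd N]
    rw [Finset.sum_congr rfl
      (fun n hn => by rw [f_formula hA f heven hodd N n (Finset.mem_range.mp hn)])]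
    have hDnF : (2:ℝ)^N * (A:ℝ)^N *
        ((f 1:ℝ) + ((b₀:ℝ)+(b₁:ℝ)) * (1 - ((A:ℝ)⁻¹)^N) / (2*((A:ℝ)-1)))
        = (2:ℝ)^N * (A:ℝ)^N * DnF ((f 1 : ℝ)) b₀ b₁ A N := rfl
    rw [hDnF, Finset.mul_sum]
    apply Finset.sum_congr rfl
    intro n hn
    have hane : ((A:ℝ))^N ≠ 0 := pow_ne_zero _ haR.ne'
    have hDne : DnF ((f 1 : ℝ)) b₀ b₁ A N ≠ 0 := by linarith
    field_simp
  · intro n hn x hx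
    unfold psi
    rw [numfN_on_piece _ _ _ hx, floor_two_pow_on_piece hn hx]
    norm_num

lemma measurable_numfN (b₀ b₁ A N : ℕ) : Measurable (numfN b₀ b₁ A N) := by
  unfold numfN
  exact Finset.measurable_sum _ (fun j _ => (measurable_bterm b₀ b₁ j).div_const _)

lemma measurable_floor_div (N : ℕ) :
    Measurable (fun x : ℝ => ((⌊(2:ℝ)^N * x⌋ : ℝ) / 2^N)) := by
  apply Measurable.div_const
  exact (measurable_from_top (f := fun z : ℤ => (z : ℝ))).comp
    (Int.measurable_floor.comp (measurable_const_mul _))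

lemma measurable_psi (c : ℝ) (b₀ b₁ A : ℕ) (h : BoundedContinuousFunction ℝ ℝ) (N : ℕ) :
    Measurable (psi c b₀ b₁ A h N) := by
  unfold psi
  exact (((measurable_const.add (measurable_numfN b₀ b₁ A N)).div_const _).mul
    (h.continuous.measurable.comp (measurable_floor_div N)))

lemma tendsto_floor_div (x : ℝ) :
    Tendsto (fun N : ℕ => ((⌊(2:ℝ)^N * x⌋ : ℝ) / 2^N)) atTop (𝓝 x) := by
  have hlow : Tendsto (fun N : ℕ => x - ((2:ℝ)⁻¹)^N) atTop (𝓝 (x - 0)) :=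
    tendsto_const_nhds.sub
      (tendsto_pow_atTop_nhds_zero_of_lt_one (by norm_num) (by norm_num))
  rw [sub_zero] at hlow
  apply tendsto_of_tendsto_of_tendsto_of_le_of_le hlow tendsto_const_nhds
  · intro N
    have h2 : (0:ℝ) < (2:ℝ)^N := by positivity
    have h3 := Int.sub_one_lt_floor ((2:ℝ)^N * x)
    rw [sub_le_iff_le_add]
    rw [div_add' _ _ _ h2.ne', le_div_iff₀ h2]
    have e : ((2:ℝ)⁻¹)^N * (2:ℝ)^N = 1 := by
      rw [inv_pow, inv_mul_cancel₀ (by positivity)]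
    nlinarith [h3]
  · intro N
    have h2 : (0:ℝ) < (2:ℝ)^N := by positivity
    rw [div_le_iff₀ h2]
    have := Int.floor_le ((2:ℝ)^N * x)
    linarith

lemma psi_bound {c : ℝ} (hc : 1 ≤ c) {A : ℕ} (hA : 2 ≤ A) (b₀ b₁ : ℕ)
    (h : BoundedContinuousFunction ℝ ℝ) (N : ℕ) (x : ℝ) :
    ‖psi c b₀ b₁ A h N x‖ ≤ (c + ((b₀:ℝ)+(b₁:ℝ)) / ((A:ℝ)-1)) * ‖h‖ := by
  have hDn : 1 ≤ DnF c b₀ b₁ A N := DnF_ge hc hA b₀ b₁ N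
  have hnum0 : 0 ≤ numfN b₀ b₁ A N x := by
    unfold numfN
    exact Finset.sum_nonneg (fun j _ => div_nonneg (bterm_nonneg _ _ _ _) (by positivity))
  have hnum1 : numfN b₀ b₁ A N x ≤ ((b₀:ℝ)+(b₁:ℝ)) / ((A:ℝ)-1) := sum_bterm_le hA x _
  have hq0 : 0 ≤ (c + numfN b₀ b₁ A N x) / DnF c b₀ b₁ A N := by
    apply div_nonneg (by linarith) (by linarith)
  have hq1 : (c + numfN b₀ b₁ A N x) / DnF c b₀ b₁ A N ≤ c + ((b₀:ℝ)+(b₁:ℝ)) / ((A:ℝ)-1) := by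
    calc (c + numfN b₀ b₁ A N x) / DnF c b₀ b₁ A N ≤ (c + numfN b₀ b₁ A N x) / 1 := by
          apply div_le_div_of_nonneg_left (by linarith) (by norm_num) hDn
      _ = c + numfN b₀ b₁ A N x := by norm_num
      _ ≤ c + ((b₀:ℝ)+(b₁:ℝ)) / ((A:ℝ)-1) := by linarith
  unfold psi
  rw [norm_mul]
  have hh := h.norm_coe_le_norm ((⌊(2:ℝ)^N * x⌋ : ℝ) / 2^N)
  calc ‖(c + numfN b₀ b₁ A N x) / DnF c b₀ b₁ A N‖ * ‖h ((⌊(2:ℝ)^N * x⌋ : ℝ) / 2^N)‖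
      ≤ (c + ((b₀:ℝ)+(b₁:ℝ)) / ((A:ℝ)-1)) * ‖h‖ := by
        apply mul_le_mul _ hh (norm_nonneg _) (by linarith)
        rw [Real.norm_eq_abs, abs_of_nonneg hq0]
        exact hq1

lemma tendsto_psi {c : ℝ} (hc : 1 ≤ c) {A : ℕ} (hA : 2 ≤ A) (b₀ b₁ : ℕ)
    (h : BoundedContinuousFunction ℝ ℝ) (x : ℝ) :
    Tendsto (fun N => psi c b₀ b₁ A h N x) atTop
      (𝓝 (((c + ∑' j, bterm b₀ b₁ j x / (A:ℝ)^(j+1)) /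
        (c + ((b₀:ℝ)+(b₁:ℝ)) / (2*(A:ℝ)-2))) * h x)) := by
  have t1 : Tendsto (fun N => numfN b₀ b₁ A N x) atTop
      (𝓝 (∑' j, bterm b₀ b₁ j x / (A:ℝ)^(j+1))) :=
    (summable_bterm hA x).hasSum.tendsto_sum_nat
  have t2 := tendsto_DnF (c := c) hA b₀ b₁
  have t3 := (h.continuous.tendsto x).comp (tendsto_floor_div x)
  have hDne : c + ((b₀:ℝ)+(b₁:ℝ)) / (2*(A:ℝ)-2) ≠ 0 := by
    have haR : (1:ℝ) < A := by exact_mod_cast (by omega : 1 < A)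
    have : (0:ℝ) ≤ ((b₀:ℝ)+(b₁:ℝ)) / (2*(A:ℝ)-2) :=
      div_nonneg (by positivity) (by linarith)
    intro hz; linarith
  exact ((tendsto_const_nhds.add t1).div t2 hDne).mul t3

lemma isFiniteMeasure_restrict_Ico :
    IsFiniteMeasure (volume.restrict (Set.Ico (0:ℝ) 1)) := by
  constructor
  rw [Measure.restrict_apply_univ]
  simp [Real.volume_Ico]

lemma ghost_tendsto {b₀ b₁ A : ℕ} (hA : 2 ≤ A) (f : ℕ → ℕ) (hf1 : 1 ≤ f 1)
    (heven : ∀ n, 1 ≤ n → f (2 * n) = A * f n + b₀)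
    (hodd : ∀ n, 1 ≤ n → f (2 * n + 1) = A * f n + b₁)
    (h : BoundedContinuousFunction ℝ ℝ) :
    Tendsto (fun N => ∫ x, h x ∂(ghostApprox f N)) atTop
      (𝓝 (∫ x in Set.Ico (0:ℝ) 1,
        (((f 1:ℝ) + ∑' j, bterm b₀ b₁ j x / (A:ℝ)^(j+1)) /
          ((f 1:ℝ) + ((b₀:ℝ)+(b₁:ℝ)) / (2*(A:ℝ)-2))) * h x)) := by
  have hc : (1:ℝ) ≤ (f 1 : ℝ) := by exact_mod_cast hf1
  haveI := isFiniteMeasure_restrict_Ico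
  have key : ∀ N, ∫ x, h x ∂(ghostApprox f N)
      = ∫ x in Set.Ico (0:ℝ) 1, psi ((f 1 : ℝ)) b₀ b₁ A h N x :=
    fun N => ghost_eq_integral_psi hA f hf1 heven hodd h N
  simp only [key]
  apply tendsto_integral_of_dominated_convergence
    (fun _ => ((f 1:ℝ) + ((b₀:ℝ)+(b₁:ℝ)) / ((A:ℝ)-1)) * ‖h‖)
  · exact fun N => (measurable_psi _ _ _ _ h N).aestronglyMeasurable
  · exact integrable_const _
  · exact fun N => Filter.Eventually.of_forall (fun x => psi_bound hc hA b₀ b₁ h N x)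
  · exact Filter.Eventually.of_forall (fun x => tendsto_psi hc hA b₀ b₁ h x)

noncomputable def gdens (c : ℝ) (b₀ b₁ A : ℕ) (x : ℝ) : ℝ :=
  (c + ∑' j, bterm b₀ b₁ j x / (A:ℝ)^(j+1)) / (c + ((b₀:ℝ)+(b₁:ℝ)) / (2*(A:ℝ)-2))

lemma gdens_nonneg {c : ℝ} (hc : 1 ≤ c) {A : ℕ} (hA : 2 ≤ A) (b₀ b₁ : ℕ) (x : ℝ) :
    0 ≤ gdens c b₀ b₁ A x := by
  have haR : (1:ℝ) < A := by exact_mod_cast (by omega : 1 < A)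
  have h1 := tsum_bterm_nonneg (b₀ := b₀) (b₁ := b₁) hA x
  have h2 : (0:ℝ) ≤ ((b₀:ℝ)+(b₁:ℝ)) / (2*(A:ℝ)-2) := div_nonneg (by positivity) (by linarith)
  exact div_nonneg (by linarith) (by linarith)

lemma gdens_le {c : ℝ} (hc : 1 ≤ c) {A : ℕ} (hA : 2 ≤ A) (b₀ b₁ : ℕ) (x : ℝ) :
    gdens c b₀ b₁ A x ≤ c + ((b₀:ℝ)+(b₁:ℝ)) / ((A:ℝ)-1) := by
  have haR : (1:ℝ) < A := by exact_mod_cast (by omega : 1 < A)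
  have h1 := tsum_bterm_nonneg (b₀ := b₀) (b₁ := b₁) hA x
  have h2 : (0:ℝ) ≤ ((b₀:ℝ)+(b₁:ℝ)) / (2*(A:ℝ)-2) := div_nonneg (by positivity) (by linarith)
  have h3 := tsum_bterm_le (b₀ := b₀) (b₁ := b₁) hA x
  calc gdens c b₀ b₁ A x
      ≤ (c + ∑' j, bterm b₀ b₁ j x / (A:ℝ)^(j+1)) / 1 := by
        unfold gdens
        apply div_le_div_of_nonneg_left (by linarith) (by norm_num) (by linarith)
    _ = c + ∑' j, bterm b₀ b₁ j x / (A:ℝ)^(j+1) := by norm_num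
    _ ≤ c + ((b₀:ℝ)+(b₁:ℝ)) / ((A:ℝ)-1) := by linarith

lemma measurable_gdens (c : ℝ) {A : ℕ} (hA : 2 ≤ A) (b₀ b₁ : ℕ) :
    Measurable (gdens c b₀ b₁ A) := by
  unfold gdens
  apply Measurable.div_const
  apply Measurable.const_add
  apply measurable_of_tendsto_metrizable (fun N => measurable_numfN b₀ b₁ A N)
  exact tendsto_pi_nhds.mpr (fun x => (summable_bterm hA x).hasSum.tendsto_sum_nat)

lemma integral_withDensity_gdens {c : ℝ} (hc : 1 ≤ c) {A : ℕ} (hA : 2 ≤ A) (b₀ b₁ : ℕ)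
    (h : BoundedContinuousFunction ℝ ℝ) :
    ∫ x, h x ∂((volume.restrict (Set.Ico (0:ℝ) 1)).withDensity
        (fun x => ENNReal.ofReal (gdens c b₀ b₁ A x)))
      = ∫ x in Set.Ico (0:ℝ) 1, gdens c b₀ b₁ A x * h x := by
  have hm : Measurable (fun x => Real.toNNReal (gdens c b₀ b₁ A x)) :=
    (measurable_gdens c hA b₀ b₁).real_toNNReal
  have he : (fun x => ENNReal.ofReal (gdens c b₀ b₁ A x))
      = fun x => ((Real.toNNReal (gdens c b₀ b₁ A x)) : ENNReal) := rfl
  rw [he, integral_withDensity_eq_integral_smul hm]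
  apply integral_congr_ae
  apply Filter.Eventually.of_forall
  intro x
  show (gdens c b₀ b₁ A x).toNNReal • h x = gdens c b₀ b₁ A x * h x
  rw [NNReal.smul_def, Real.coe_toNNReal _ (gdens_nonneg hc hA b₀ b₁ x), smul_eq_mul]

lemma isFiniteMeasure_nu {c : ℝ} (hc : 1 ≤ c) {A : ℕ} (hA : 2 ≤ A) (b₀ b₁ : ℕ) :
    IsFiniteMeasure ((volume.restrict (Set.Ico (0:ℝ) 1)).withDensity
        (fun x => ENNReal.ofReal (gdens c b₀ b₁ A x))) := by
  constructor
  rw [withDensity_apply _ MeasurableSet.univ, Measure.restrict_univ]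
  calc ∫⁻ x, ENNReal.ofReal (gdens c b₀ b₁ A x) ∂(volume.restrict (Set.Ico (0:ℝ) 1))
      ≤ ∫⁻ _, ENNReal.ofReal (c + ((b₀:ℝ)+(b₁:ℝ)) / ((A:ℝ)-1))
          ∂(volume.restrict (Set.Ico (0:ℝ) 1)) :=
        lintegral_mono (fun x => ENNReal.ofReal_le_ofReal (gdens_le hc hA b₀ b₁ x))
    _ = ENNReal.ofReal (c + ((b₀:ℝ)+(b₁:ℝ)) / ((A:ℝ)-1))
          * (volume.restrict (Set.Ico (0:ℝ) 1)) Set.univ := lintegral_const _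
    _ < ⊤ := by
        apply ENNReal.mul_lt_top ENNReal.ofReal_lt_top
        rw [Measure.restrict_apply_univ]
        simp [Real.volume_Ico]

end Stmt7Aux

theorem stmt_7 (A₀ A₁ b₀ b₁ : ℕ) (hnz : ¬(A₀ = 0 ∧ A₁ = 0 ∧ b₀ = 0 ∧ b₁ = 0))
    (f : ℕ → ℕ) (hf1 : 1 ≤ f 1)
    (heven : ∀ n, 1 ≤ n → f (2 * n) = A₀ * f n + b₀)
    (hodd : ∀ n, 1 ≤ n → f (2 * n + 1) = A₁ * f n + b₁)
    (hb : 1 ≤ b₀ + b₁) (hA : A₀ = A₁) (hA1 : 1 < A₀)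
    (μ : Measure ℝ) (hμ : IsProbabilityMeasure μ)
    (hlim : WeakLimit (ghostApprox f) μ) :
    ∀ E : Set ℝ, MeasurableSet E → E ⊆ Set.Ico (0:ℝ) 1 →
      μ E = ∫⁻ x in E,
        ENNReal.ofReal
          (((f 1 : ℝ) + ∑' j : ℕ,
              (if ⌊(2:ℝ) ^ (j + 1) * x⌋ % 2 = 0 then (b₀ : ℝ) else (b₁ : ℝ)) /
                (A₀ : ℝ) ^ (j + 1)) /
            ((f 1 : ℝ) + ((b₀ : ℝ) + b₁) / (2 * A₀ - 2))) := by
  intro E hE hEsub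
  subst hA
  have hA2 : 2 ≤ A₀ := hA1
  have hc : (1:ℝ) ≤ (f 1 : ℝ) := by exact_mod_cast hf1
  set ν : Measure ℝ := (volume.restrict (Set.Ico (0:ℝ) 1)).withDensity
      (fun x => ENNReal.ofReal (Stmt7Aux.gdens ((f 1:ℝ)) b₀ b₁ A₀ x)) with hν
  haveI hfin : IsFiniteMeasure ν := Stmt7Aux.isFiniteMeasure_nu hc hA2 b₀ b₁
  have heqBCF : ∀ h : BoundedContinuousFunction ℝ ℝ, ∫ x, h x ∂μ = ∫ x, h x ∂ν := by
    intro h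
    have h1 := Stmt7Aux.ghost_tendsto hA2 f hf1 heven hodd h
    rw [tendsto_nhds_unique (hlim h) h1, hν,
      Stmt7Aux.integral_withDensity_gdens hc hA2 b₀ b₁ h]
    rfl
  have hμν : μ = ν := by
    apply MeasureTheory.ext_of_forall_lintegral_eq_of_IsFiniteMeasure
    intro F
    have k1 := BoundedContinuousFunction.toReal_lintegral_coe_eq_integral F μ
    have k2 := BoundedContinuousFunction.toReal_lintegral_coe_eq_integral F ν
    have k3 : ∫ x, (F x : ℝ) ∂μ = ∫ x, (F x : ℝ) ∂ν := by
      have := heqBCF (BoundedContinuousFunction.comp _ (isometry_subtype_coe.lipschitz) F)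
      exact this
    have hf1' : ∫⁻ x, (F x : ℝ≥0∞) ∂μ ≠ ⊤ :=
      (BoundedContinuousFunction.lintegral_lt_top_of_nnreal μ F).ne
    have hf2' : ∫⁻ x, (F x : ℝ≥0∞) ∂ν ≠ ⊤ :=
      (BoundedContinuousFunction.lintegral_lt_top_of_nnreal ν F).ne
    exact (ENNReal.toReal_eq_toReal_iff' hf1' hf2').mp (by rw [k1, k2, k3])
  rw [hμν, hν, withDensity_apply _ hE, Measure.restrict_restrict hE,
    Set.inter_eq_self_of_subset_left hEsub]
  simp only [Stmt7Aux.gdens, Stmt7Aux.bterm]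
end
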